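/- arXiv:2602.12801 — 6 statements merged into one kernel-verified Lean document; each statement's English description precedes it below -/
import Mathlib

section
/- Let A = {ξ_0, …, ξ_{m−1}} be m distinct points on the torus ℝ/ℤ and δ ∈ (0,1) with δ ≠ ξ_i − ξ_j (mod 1) for all i, j. Then the intervals of length δ are balanced with respect to A (i.e., there is an integer c such that every half-open interval of length δ on the torus contains either c or c+1 points of A) if and only if the map f_left : {0,…,m−1} → {0,…,m−1}, sending ℓ to the index j minimizing the (mod 1) distance ξ_ℓ + δ − ξ_j measured going leftward, is a bijection. -/
namespace Stmt3Aux

variable {m : ℕ} {ξ : Fin m → ℝ}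

/-- sorting permutation -/
noncomputable def sp (ξ : Fin m → ℝ) : Equiv.Perm (Fin m) :=
  Tuple.sort (fun i => Int.fract (ξ i))

/-- sorted fractional parts -/
noncomputable def u (ξ : Fin m → ℝ) (k : Fin m) : ℝ := Int.fract (ξ (sp ξ k))

lemma u_mono : Monotone (u ξ) := Tuple.monotone_sort (fun i => Int.fract (ξ i))

lemma u_nonneg (k : Fin m) : 0 ≤ u ξ k := Int.fract_nonneg _
lemma u_lt_one (k : Fin m) : u ξ k < 1 := Int.fract_lt_one _

lemma u_strictMono (hinj : Function.Injective fun i => Int.fract (ξ i)) :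
    StrictMono (u ξ) :=
  u_mono.strictMono_of_injective (hinj.comp (sp ξ).injective)

def finr (hm : 0 < m) (n : ℤ) : Fin m :=
  ⟨(n % (m : ℤ)).toNat, by
    have h1 : 0 ≤ n % (m : ℤ) := Int.emod_nonneg n (by exact_mod_cast hm.ne')
    have h2 : n % (m : ℤ) < m := Int.emod_lt_of_pos n (by exact_mod_cast hm)
    omega⟩

noncomputable def tt (hm : 0 < m) (ξ : Fin m → ℝ) (n : ℤ) : ℝ :=
  ((n / (m : ℤ) : ℤ) : ℝ) + u ξ (finr hm n)

noncomputable def pp (hm : 0 < m) (ξ : Fin m → ℝ) (n : ℤ) : Fin m := sp ξ (finr hm n)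

noncomputable def nu (ξ : Fin m → ℝ) (i : Fin m) : ℤ := (((sp ξ).symm i : Fin m) : ℤ)

lemma finr_shift (hm : 0 < m) (n z : ℤ) : finr hm (n + z * m) = finr hm n := by
  apply Fin.ext
  simp [finr, Int.add_mul_emod_self_right]

lemma tt_shift (hm : 0 < m) (n z : ℤ) : tt hm ξ (n + z * m) = tt hm ξ n + z := by
  unfold tt
  rw [finr_shift, Int.add_mul_ediv_right _ _ (by exact_mod_cast hm.ne' : (m:ℤ) ≠ 0)]
  push_cast
  ring

lemma pp_shift (hm : 0 < m) (n z : ℤ) : pp hm ξ (n + z * m) = pp hm ξ n := by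
  unfold pp; rw [finr_shift]

lemma ediv_emod_spec {M a q r : ℤ} (hM : 0 < M) (h : a = q * M + r) (h0 : 0 ≤ r)
    (h1 : r < M) : a / M = q ∧ a % M = r := by
  have h' : a = r + q * M := by omega
  constructor
  · rw [h', Int.add_mul_ediv_right _ _ hM.ne', Int.ediv_eq_zero_of_lt h0 h1, zero_add]
  · rw [h', Int.add_mul_emod_self_right, Int.emod_eq_of_lt h0 h1]

lemma tt_lt_succ (hm : 0 < m) (hinj : Function.Injective fun i => Int.fract (ξ i)) (n : ℤ) :
    tt hm ξ n < tt hm ξ (n + 1) := by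
  have hm' : (0:ℤ) < m := by exact_mod_cast hm
  have h1 : 0 ≤ n % (m : ℤ) := Int.emod_nonneg n hm'.ne'
  have h2 : n % (m : ℤ) < m := Int.emod_lt_of_pos n hm'
  have hd : n = (n / (m:ℤ)) * m + n % m := by
    have h := Int.mul_ediv_add_emod n m
    have h2' : (m:ℤ) * (n / m) = (n / m) * m := mul_comm _ _
    omega
  rcases lt_or_ge (n % (m:ℤ) + 1) m with hc | hc
  · have hspec := ediv_emod_spec hm' (a := n + 1) (q := n / (m:ℤ)) (r := n % m + 1)
      (by omega) (by omega) hc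
    unfold tt
    rw [hspec.1]
    have : finr hm (n + 1) = ⟨(n % (m:ℤ) + 1).toNat, by omega⟩ := by
      apply Fin.ext; simp [finr, hspec.2]
    rw [this]
    have hf : finr hm n = ⟨(n % (m:ℤ)).toNat, by omega⟩ := by
      apply Fin.ext; simp [finr]
    rw [hf]
    have := u_strictMono (ξ := ξ) hinj
      (a := ⟨(n % (m:ℤ)).toNat, by omega⟩) (b := ⟨(n % (m:ℤ) + 1).toNat, by omega⟩)
      (by simp [Fin.lt_def]; omega)
    linarith
  · have hceq : n % (m:ℤ) + 1 = m := by omega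
    have hspec := ediv_emod_spec hm' (a := n + 1) (q := n / (m:ℤ) + 1) (r := 0)
      (by have : (n / (m:ℤ) + 1) * m = (n/(m:ℤ))*m + m := by ring
          omega) (by omega) hm'
    unfold tt
    rw [hspec.1]
    have : finr hm (n + 1) = ⟨0, hm⟩ := by
      apply Fin.ext; simp [finr, hspec.2]
    rw [this]
    have hlt := u_lt_one (ξ := ξ) (finr hm n)
    have hnn := u_nonneg (ξ := ξ) (⟨0, hm⟩ : Fin m)
    push_cast
    linarith

lemma tt_strictMono (hm : 0 < m) (hinj : Function.Injective fun i => Int.fract (ξ i)) :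
    StrictMono (tt hm ξ) :=
  strictMono_int_of_lt_succ (tt_lt_succ hm hinj)

lemma fract_tt (hm : 0 < m) (n : ℤ) : Int.fract (tt hm ξ n) = u ξ (finr hm n) := by
  unfold tt
  rw [Int.fract_intCast_add, Int.fract_eq_self.2 ⟨u_nonneg _, u_lt_one _⟩]

lemma fract_pp (hm : 0 < m) (n : ℤ) :
    Int.fract (ξ (pp hm ξ n)) = Int.fract (tt hm ξ n) := by
  rw [fract_tt]; rfl

lemma nu_nonneg (i : Fin m) : 0 ≤ nu ξ i := Int.ofNat_nonneg _

lemma nu_lt (i : Fin m) : nu ξ i < m := by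
  unfold nu
  exact_mod_cast ((sp ξ).symm i).isLt

lemma finr_nu (hm : 0 < m) (i : Fin m) : finr hm (nu ξ i) = (sp ξ).symm i := by
  apply Fin.ext
  have h1 := nu_nonneg (ξ := ξ) i
  have h2 := nu_lt (ξ := ξ) i
  simp only [finr]
  rw [Int.emod_eq_of_lt h1 h2]
  simp [nu]

lemma pp_nu (hm : 0 < m) (i : Fin m) : pp hm ξ (nu ξ i) = i := by
  unfold pp
  rw [finr_nu]
  exact (sp ξ).apply_symm_apply i

lemma tt_nu (hm : 0 < m) (i : Fin m) : tt hm ξ (nu ξ i) = Int.fract (ξ i) := by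
  unfold tt
  rw [finr_nu, Int.ediv_eq_zero_of_lt (nu_nonneg i) (nu_lt i)]
  simp only [Int.cast_zero, zero_add]
  unfold u
  rw [(sp ξ).apply_symm_apply]

lemma pp_eq_iff (hm : 0 < m) (hinj : Function.Injective fun i => Int.fract (ξ i))
    {n n' : ℤ} : pp hm ξ n = pp hm ξ n' ↔ n % (m:ℤ) = n' % m := by
  have hm' : (0:ℤ) < m := by exact_mod_cast hm
  constructor
  · intro h
    have hf : finr hm n = finr hm n' := (sp ξ).injective h
    have := congrArg Fin.val hf
    simp only [finr] at this
    have h1 : 0 ≤ n % (m : ℤ) := Int.emod_nonneg n hm'.ne'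
    have h2 : 0 ≤ n' % (m : ℤ) := Int.emod_nonneg n' hm'.ne'
    omega
  · intro h
    unfold pp
    congr 1
    apply Fin.ext
    simp [finr, h]

lemma exists_mul_of_emod_eq {n n' : ℤ} (h : n % (m:ℤ) = n' % m) :
    ∃ z : ℤ, n' = n + z * m := by
  have h0 : (n - n') % (m:ℤ) = 0 := Int.emod_eq_emod_iff_emod_sub_eq_zero.mp h
  obtain ⟨z, hz⟩ := Int.dvd_of_emod_eq_zero h0
  refine ⟨-z, ?_⟩
  have : (-z) * m = -((m:ℤ) * z) := by ring
  linarith [hz]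



lemma exists_A (hm : 0 < m) (hinj : Function.Injective fun i => Int.fract (ξ i)) (x : ℝ) :
    ∃ n : ℤ, x ≤ tt hm ξ n ∧ ∀ k : ℤ, x ≤ tt hm ξ k → n ≤ k := by
  have hmono := tt_strictMono hm hinj
  apply Int.exists_least_of_bdd
  · refine ⟨(⌊x - tt hm ξ 0⌋ - 1) * m, ?_⟩
    intro z hz
    by_contra hlt
    push_neg at hlt
    have h1 : tt hm ξ z < tt hm ξ ((⌊x - tt hm ξ 0⌋ - 1) * m) := hmono hlt
    have h2 : tt hm ξ ((⌊x - tt hm ξ 0⌋ - 1) * m) = tt hm ξ 0 + (⌊x - tt hm ξ 0⌋ - 1) := by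
      have := tt_shift (ξ := ξ) hm 0 (⌊x - tt hm ξ 0⌋ - 1)
      rw [zero_add] at this
      rw [this]
      push_cast; ring
    have h3 : (⌊x - tt hm ξ 0⌋ : ℝ) ≤ x - tt hm ξ 0 := Int.floor_le _
    push_cast at h2
    linarith [hz]
  · refine ⟨⌈x - tt hm ξ 0⌉ * m, ?_⟩
    have h2 : tt hm ξ (⌈x - tt hm ξ 0⌉ * m) = tt hm ξ 0 + ⌈x - tt hm ξ 0⌉ := by
      have := tt_shift (ξ := ξ) hm 0 ⌈x - tt hm ξ 0⌉
      rw [zero_add] at this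
      exact this
    have h3 : (x - tt hm ξ 0) ≤ ⌈x - tt hm ξ 0⌉ := Int.le_ceil _
    linarith

noncomputable def AA (hm : 0 < m) (hinj : Function.Injective fun i => Int.fract (ξ i))
    (x : ℝ) : ℤ := (exists_A hm hinj x).choose

lemma AA_spec (hm : 0 < m) (hinj : Function.Injective fun i => Int.fract (ξ i)) (x : ℝ) :
    x ≤ tt hm ξ (AA hm hinj x) ∧ ∀ k : ℤ, x ≤ tt hm ξ k → AA hm hinj x ≤ k :=
  (exists_A hm hinj x).choose_spec

lemma AA_le_iff (hm : 0 < m) (hinj : Function.Injective fun i => Int.fract (ξ i))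
    {x : ℝ} {n : ℤ} : AA hm hinj x ≤ n ↔ x ≤ tt hm ξ n := by
  constructor
  · intro h
    exact le_trans (AA_spec hm hinj x).1 ((tt_strictMono hm hinj).monotone h)
  · exact (AA_spec hm hinj x).2 n

lemma lt_AA_iff (hm : 0 < m) (hinj : Function.Injective fun i => Int.fract (ξ i))
    {x : ℝ} {n : ℤ} : n < AA hm hinj x ↔ tt hm ξ n < x := by
  rw [← not_le, ← not_le, AA_le_iff hm hinj]

lemma AA_tt (hm : 0 < m) (hinj : Function.Injective fun i => Int.fract (ξ i)) (n : ℤ) :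
    AA hm hinj (tt hm ξ n) = n := by
  have h1 : AA hm hinj (tt hm ξ n) ≤ n := (AA_le_iff hm hinj).2 le_rfl
  have h2 : ¬ (AA hm hinj (tt hm ξ n) ≤ n - 1) := by
    rw [AA_le_iff hm hinj, not_le]
    exact tt_strictMono hm hinj (by omega)
  omega

lemma AA_mono (hm : 0 < m) (hinj : Function.Injective fun i => Int.fract (ξ i))
    {x y : ℝ} (h : x ≤ y) : AA hm hinj x ≤ AA hm hinj y := by
  rw [AA_le_iff hm hinj]
  exact le_trans h (AA_spec hm hinj y).1

lemma AA_shift (hm : 0 < m) (hinj : Function.Injective fun i => Int.fract (ξ i))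
    (x : ℝ) (z : ℤ) : AA hm hinj (x + z) = AA hm hinj x + z * m := by
  have h1 : AA hm hinj (x + z) ≤ AA hm hinj x + z * m := by
    rw [AA_le_iff hm hinj, tt_shift]
    linarith [(AA_spec hm hinj x).1]
  have h2 : AA hm hinj x ≤ AA hm hinj (x + z) - z * m := by
    rw [AA_le_iff hm hinj]
    have := tt_shift (ξ := ξ) hm (AA hm hinj (x + z) - z * m) z
    have h3 : AA hm hinj (x + z) - z * m + z * m = AA hm hinj (x + z) := by ring
    rw [h3] at this
    have h4 := (AA_spec hm hinj (x + z)).1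
    linarith
  omega

/-- canonical lift of `ξ i` into `[x, x+1)` -/
noncomputable def LL (hm : 0 < m) (ξ : Fin m → ℝ) (i : Fin m) (x : ℝ) : ℤ :=
  nu ξ i + ⌈x - tt hm ξ (nu ξ i)⌉ * m

lemma tt_LL (hm : 0 < m) (i : Fin m) (x : ℝ) :
    tt hm ξ (LL hm ξ i x) = tt hm ξ (nu ξ i) + ⌈x - tt hm ξ (nu ξ i)⌉ := tt_shift hm _ _

lemma LL_mem (hm : 0 < m) (i : Fin m) (x : ℝ) :
    x ≤ tt hm ξ (LL hm ξ i x) ∧ tt hm ξ (LL hm ξ i x) < x + 1 := by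
  rw [tt_LL]
  constructor
  · linarith [Int.le_ceil (x - tt hm ξ (nu ξ i))]
  · linarith [Int.ceil_lt_add_one (x - tt hm ξ (nu ξ i))]

lemma fract_sub_eq_LL (hm : 0 < m) (i : Fin m) (x : ℝ) :
    Int.fract (ξ i - x) = tt hm ξ (LL hm ξ i x) - x := by
  have key : ξ i - x = (tt hm ξ (LL hm ξ i x) - x) + ((⌊ξ i⌋ - ⌈x - tt hm ξ (nu ξ i)⌉ : ℤ) : ℝ) := by
    rw [tt_LL, tt_nu]
    have h1 : ⌊ξ i⌋ + Int.fract (ξ i) = ξ i := Int.floor_add_fract _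
    push_cast
    linarith
  have hmem1 := (LL_mem (ξ := ξ) hm i x).1
  have hmem2 := (LL_mem (ξ := ξ) hm i x).2
  rw [key, Int.fract_add_intCast, Int.fract_eq_self.2 ⟨by linarith, by linarith⟩]

lemma pp_LL (hm : 0 < m) (i : Fin m) (x : ℝ) : pp hm ξ (LL hm ξ i x) = i := by
  unfold LL
  rw [pp_shift, pp_nu]

lemma card_eq (hm : 0 < m) (hinj : Function.Injective fun i => Int.fract (ξ i))
    {δ : ℝ} (hδ0 : 0 < δ) (hδ1 : δ < 1) (x : ℝ) :
    Nat.card {i : Fin m // Int.fract (ξ i - x) < δ}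
      = (AA hm hinj (x + δ) - AA hm hinj x).toNat := by
  have hmem : ∀ i : Fin m, Int.fract (ξ i - x) < δ ↔
      LL hm ξ i x ∈ Finset.Ico (AA hm hinj x) (AA hm hinj (x + δ)) := by
    intro i
    rw [Finset.mem_Ico]
    constructor
    · intro h
      refine ⟨(AA_le_iff hm hinj).2 (LL_mem hm i x).1, ?_⟩
      rw [lt_AA_iff hm hinj]
      have := fract_sub_eq_LL (ξ := ξ) hm i x
      linarith
    · intro ⟨h1, h2⟩
      rw [lt_AA_iff hm hinj] at h2
      have := fract_sub_eq_LL (ξ := ξ) hm i x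
      linarith
  have e : {i : Fin m // Int.fract (ξ i - x) < δ}
      ≃ {n : ℤ // n ∈ Finset.Ico (AA hm hinj x) (AA hm hinj (x + δ))} := by
    refine ⟨fun i => ⟨LL hm ξ i.1 x, (hmem i.1).1 i.2⟩, fun n => ⟨pp hm ξ n.1, ?_⟩, ?_, ?_⟩
    · obtain ⟨n, hn⟩ := n
      rw [Finset.mem_Ico] at hn
      have hx1 : x ≤ tt hm ξ n := (AA_le_iff hm hinj).1 hn.1
      have hx2 : tt hm ξ n < x + δ := by
        rw [← lt_AA_iff hm hinj]; exact hn.2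
      have hfr : Int.fract (ξ (pp hm ξ n) - x) = tt hm ξ n - x := by
        obtain ⟨z, hz⟩ := Int.fract_eq_fract.1 (fract_pp (ξ := ξ) hm n)
        have : ξ (pp hm ξ n) - x = (tt hm ξ n - x) + (z : ℝ) := by linarith
        rw [this, Int.fract_add_intCast, Int.fract_eq_self.2 ⟨by linarith, by linarith⟩]
      simp only [hfr]
      linarith
    · intro ⟨i, hi⟩
      simp only [Subtype.mk.injEq]
      exact pp_LL hm i x
    · intro ⟨n, hn⟩
      simp only [Subtype.mk.injEq]
      rw [Finset.mem_Ico] at hn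
      have h1 : pp hm ξ (LL hm ξ (pp hm ξ n) x) = pp hm ξ n := pp_LL hm _ x
      have h2 := (pp_eq_iff hm hinj).1 h1
      obtain ⟨z, hz⟩ := exists_mul_of_emod_eq h2
      have h3 : tt hm ξ n = tt hm ξ (LL hm ξ (pp hm ξ n) x) + z := by
        have := tt_shift (ξ := ξ) hm (LL hm ξ (pp hm ξ n) x) z
        rw [← hz] at this
        exact this
      have hx1 : x ≤ tt hm ξ n := (AA_le_iff hm hinj).1 hn.1
      have hx2 : tt hm ξ n < x + δ := by rw [← lt_AA_iff hm hinj]; exact hn.2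
      have hz1 := (LL_mem (ξ := ξ) hm (pp hm ξ n) x).1
      have hz2 := (LL_mem (ξ := ξ) hm (pp hm ξ n) x).2
      have hz0 : z = 0 := by
        have hzlt : (z : ℝ) < 1 := by linarith
        have hzgt : (-1 : ℝ) < (z : ℝ) := by linarith
        have l1 : z < 1 := by exact_mod_cast hzlt
        have l2 : -1 < z := by exact_mod_cast hzgt
        omega
      rw [hz0] at hz
      simp at hz
      exact hz.symm
  rw [Nat.card_congr e]
  rw [Nat.card_eq_finsetCard]
  exact Int.card_Ico _ _

lemma tt_ne_add (hm : 0 < m) {δ : ℝ} (hδ0 : 0 ≤ δ) (hδ1 : δ < 1)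
    (hδne : ∀ i j : Fin m, Int.fract (ξ i - ξ j) ≠ δ) (k n : ℤ) :
    tt hm ξ k ≠ tt hm ξ n + δ := by
  intro h
  obtain ⟨a, ha⟩ := Int.fract_eq_fract.1 (fract_pp (ξ := ξ) hm k)
  obtain ⟨b, hb⟩ := Int.fract_eq_fract.1 (fract_pp (ξ := ξ) hm n)
  apply hδne (pp hm ξ k) (pp hm ξ n)
  have key : ξ (pp hm ξ k) - ξ (pp hm ξ n) = δ + ((a - b : ℤ) : ℝ) := by
    push_cast
    linarith
  rw [key, Int.fract_add_intCast, Int.fract_eq_self.2 ⟨hδ0, hδ1⟩]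

/-- index of the nearest point strictly below `ξ (p n) + δ` -/
noncomputable def gg (hm : 0 < m) (hinj : Function.Injective fun i => Int.fract (ξ i))
    (δ : ℝ) (n : ℤ) : ℤ := AA hm hinj (tt hm ξ n + δ) - 1

lemma gg_lt (hm : 0 < m) (hinj : Function.Injective fun i => Int.fract (ξ i))
    {δ : ℝ} (n : ℤ) : tt hm ξ (gg hm hinj δ n) < tt hm ξ n + δ := by
  rw [← lt_AA_iff hm hinj]
  unfold gg
  omega

lemma lt_gg_succ (hm : 0 < m) (hinj : Function.Injective fun i => Int.fract (ξ i))
    {δ : ℝ} (hδ0 : 0 ≤ δ) (hδ1 : δ < 1)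
    (hδne : ∀ i j : Fin m, Int.fract (ξ i - ξ j) ≠ δ) (n : ℤ) :
    tt hm ξ n + δ < tt hm ξ (gg hm hinj δ n + 1) := by
  have h1 : tt hm ξ n + δ ≤ tt hm ξ (AA hm hinj (tt hm ξ n + δ)) :=
    (AA_spec hm hinj _).1
  have h2 : gg hm hinj δ n + 1 = AA hm hinj (tt hm ξ n + δ) := by unfold gg; ring
  rw [h2]
  exact lt_of_le_of_ne h1 (Ne.symm (tt_ne_add hm hδ0 hδ1 hδne _ n))

lemma gg_ge (hm : 0 < m) (hinj : Function.Injective fun i => Int.fract (ξ i))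
    {δ : ℝ} (hδ0 : 0 < δ) (n : ℤ) : n ≤ gg hm hinj δ n := by
  have : n < AA hm hinj (tt hm ξ n + δ) := (lt_AA_iff hm hinj).2 (by linarith)
  unfold gg
  omega

lemma gg_mono (hm : 0 < m) (hinj : Function.Injective fun i => Int.fract (ξ i))
    {δ : ℝ} {n n' : ℤ} (h : n ≤ n') : gg hm hinj δ n ≤ gg hm hinj δ n' := by
  have := AA_mono hm hinj (x := tt hm ξ n + δ) (y := tt hm ξ n' + δ)
    (by have := (tt_strictMono hm hinj).monotone h; linarith)
  unfold gg
  omega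

lemma tt_add_m (hm : 0 < m) (n : ℤ) : tt hm ξ (n + m) = tt hm ξ n + 1 := by
  have := tt_shift (ξ := ξ) hm n 1
  rw [one_mul] at this
  rw [this]
  norm_num

lemma gg_shift (hm : 0 < m) (hinj : Function.Injective fun i => Int.fract (ξ i))
    {δ : ℝ} (n : ℤ) : gg hm hinj δ (n + m) = gg hm hinj δ n + m := by
  unfold gg
  rw [tt_add_m hm n]
  have : tt hm ξ n + 1 + δ = tt hm ξ n + δ + ((1 : ℤ) : ℝ) := by push_cast; ring
  rw [this, AA_shift hm hinj]
  ring

lemma f_eq_gg (hm : 0 < m) (hinj : Function.Injective fun i => Int.fract (ξ i))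
    {δ : ℝ} (hδ0 : 0 < δ) (hδ1 : δ < 1)
    (hδne : ∀ i j : Fin m, Int.fract (ξ i - ξ j) ≠ δ)
    (f : Fin m → Fin m)
    (hf : ∀ l i : Fin m, Int.fract (ξ l + δ - ξ (f l)) ≤ Int.fract (ξ l + δ - ξ i))
    (n : ℤ) : f (pp hm ξ n) = pp hm ξ (gg hm hinj δ n) := by
  set l := pp hm ξ n with hl
  set j := pp hm ξ (gg hm hinj δ n) with hj
  set ε : ℝ := tt hm ξ n + δ - tt hm ξ (gg hm hinj δ n) with hε
  have hε0 : 0 < ε := by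
    have := gg_lt hm hinj (δ := δ) n
    simp only [hε]
    linarith
  have hε1 : ε < 1 := by
    have h1 := lt_gg_succ hm hinj (le_of_lt hδ0) hδ1 hδne n
    have h2 : tt hm ξ (gg hm hinj δ n + 1) ≤ tt hm ξ (gg hm hinj δ n + m) :=
      (tt_strictMono hm hinj).monotone (by omega)
    rw [tt_add_m hm] at h2
    simp only [hε]
    linarith
  obtain ⟨a, ha⟩ := Int.fract_eq_fract.1 (fract_pp (ξ := ξ) hm n)
  have hεj : Int.fract (ξ l + δ - ξ j) = ε := by
    obtain ⟨b, hb⟩ := Int.fract_eq_fract.1 (fract_pp (ξ := ξ) hm (gg hm hinj δ n))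
    have key : ξ l + δ - ξ j = ε + ((a - b : ℤ) : ℝ) := by
      simp only [hε]; push_cast; linarith
    rw [key, Int.fract_add_intCast, Int.fract_eq_self.2 ⟨le_of_lt hε0, hε1⟩]
  have key : ∀ i : Fin m, ε ≤ Int.fract (ξ l + δ - ξ i) ∧
      (Int.fract (ξ l + δ - ξ i) = ε → i = j) := by
    intro i
    set e : ℝ := Int.fract (ξ l + δ - ξ i) with hedef
    have he1 : 0 ≤ e := Int.fract_nonneg _
    have he2 : e < 1 := Int.fract_lt_one _
    have he0 : 0 < e := by
      rcases lt_or_eq_of_le he1 with h | h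
      · exact h
      · exfalso
        apply hδne i l
        have hz : ξ l + δ - ξ i - e = (⌊ξ l + δ - ξ i⌋ : ℝ) := Int.self_sub_fract _
        have key2 : ξ i - ξ l = δ + ((-⌊ξ l + δ - ξ i⌋ : ℤ) : ℝ) := by
          push_cast; linarith
        rw [key2, Int.fract_add_intCast, Int.fract_eq_self.2 ⟨le_of_lt hδ0, hδ1⟩]
    have hz : ξ l + δ - ξ i - e = (⌊ξ l + δ - ξ i⌋ : ℝ) := Int.self_sub_fract _
    set z : ℤ := ⌊ξ l + δ - ξ i⌋
    -- y := tt n + δ - e is a lift of ξ i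
    have hy : tt hm ξ n + δ - e = ξ i + ((z - a : ℤ) : ℝ) := by
      push_cast; linarith
    have hfr : ξ i - Int.fract (ξ i) = (⌊ξ i⌋ : ℝ) := Int.self_sub_fract _
    set z' : ℤ := ⌊ξ i⌋ + z - a with hz'
    set k : ℤ := nu ξ i + z' * m with hk
    have htk : tt hm ξ k = tt hm ξ n + δ - e := by
      rw [hk, tt_shift, tt_nu]
      have hz'c : (z' : ℝ) = (⌊ξ i⌋ : ℝ) + (z : ℝ) - (a : ℝ) := by exact_mod_cast hz'
      have hyc : tt hm ξ n + δ - e = ξ i + ((z : ℝ) - (a : ℝ)) := by push_cast at hy; linarith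
      linarith [hz'c, hyc, hfr]
    have hklt : k < AA hm hinj (tt hm ξ n + δ) := by
      rw [lt_AA_iff hm hinj, htk]
      linarith
    have hkle : k ≤ gg hm hinj δ n := by unfold gg at hklt ⊢; omega
    have htle : tt hm ξ k ≤ tt hm ξ (gg hm hinj δ n) :=
      (tt_strictMono hm hinj).monotone hkle
    constructor
    · rw [htk] at htle
      simp only [hε]
      linarith
    · intro heq
      have htkeq : tt hm ξ k = tt hm ξ (gg hm hinj δ n) := by
        rw [htk, ← hedef] at *
        rw [htk]
        simp only [hε] at heq ⊢
        linarith
      have hkeq : k = gg hm hinj δ n := (tt_strictMono hm hinj).injective htkeq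
      have hfri : Int.fract (ξ i) = Int.fract (ξ (pp hm ξ k)) := by
        rw [fract_pp (ξ := ξ) hm k]
        apply Int.fract_eq_fract.2
        refine ⟨a - z, ?_⟩
        rw [htk]
        push_cast
        linarith
      have : i = pp hm ξ k := hinj hfri
      rw [this, hkeq, hj]
  have h1 := hf l j
  rw [hεj] at h1
  exact (key (f l)).2 (le_antisymm h1 (key (f l)).1)

lemma iter_ge (g : ℤ → ℤ) (hstep : ∀ n, g n + 1 ≤ g (n + 1)) :
    ∀ (k : ℕ) (n : ℤ), g n + k ≤ g (n + k) := by
  intro k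
  induction k with
  | zero => intro n; simp
  | succ k ih =>
    intro n
    have h1 := ih n
    have h2 := hstep (n + k)
    have h3 : n + (k + 1 : ℕ) = n + k + 1 := by push_cast; ring
    rw [h3]
    push_cast
    omega

lemma step_eq (hm : 0 < m) (g : ℤ → ℤ) (hshift : ∀ n, g (n + m) = g n + m)
    (hstep : ∀ n, g n + 1 ≤ g (n + 1)) : ∀ n, g (n + 1) = g n + 1 := by
  intro n
  by_contra hne
  have h2 : g n + 2 ≤ g (n + 1) := by have := hstep n; omega
  have h3 := iter_ge g hstep (m - 1) (n + 1)
  have hcast : ((m - 1 : ℕ) : ℤ) = (m : ℤ) - 1 := by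
    have : 1 ≤ m := hm
    omega
  rw [hcast] at h3
  have h4 : n + 1 + ((m : ℤ) - 1) = n + m := by ring
  rw [h4] at h3
  have h5 := hshift n
  omega

lemma lin_of_step (g : ℤ → ℤ) (hstep1 : ∀ n, g (n + 1) = g n + 1) :
    ∀ n, g n = n + g 0 := by
  intro n
  induction n using Int.induction_on with
  | zero => simp
  | succ k ih =>
    rw [hstep1 k, ih]
    push_cast
    ring
  | pred k ih =>
    have h := hstep1 (-(k : ℤ) - 1)
    have h2 : -(k : ℤ) - 1 + 1 = -(k : ℤ) := by ring
    rw [h2, ih] at h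
    push_cast at h ⊢
    omega

end Stmt3Aux

/-- The half-open intervals of length `δ` on the torus `ℝ/ℤ` are balanced with respect to the
points `ξ 0, …, ξ (m-1)`: there is a `c` such that every interval `[x, x+δ)` (mod 1) contains
either `c` or `c + 1` of the points. A point `ξ i` lies in `[x, x+δ)` mod 1 iff
`Int.fract (ξ i - x) < δ`. -/
def BalancedIntervals (m : ℕ) (ξ : Fin m → ℝ) (δ : ℝ) : Prop :=
  ∃ c : ℕ, ∀ x : ℝ,
    Nat.card {i : Fin m // Int.fract (ξ i - x) < δ} = c ∨
    Nat.card {i : Fin m // Int.fract (ξ i - x) < δ} = c + 1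

theorem stmt3 (m : ℕ) (hm : 1 ≤ m) (ξ : Fin m → ℝ) (δ : ℝ) (hδ : δ ∈ Set.Ioo (0:ℝ) 1)
    (hdist : ∀ i j : Fin m, i ≠ j → Int.fract (ξ i - ξ j) ≠ 0)
    (hδne : ∀ i j : Fin m, Int.fract (ξ i - ξ j) ≠ δ)
    (f : Fin m → Fin m)
    (hf : ∀ l i : Fin m, Int.fract (ξ l + δ - ξ (f l)) ≤ Int.fract (ξ l + δ - ξ i)) :
    BalancedIntervals m ξ δ ↔ Function.Bijective f := by
  obtain ⟨hδ0, hδ1⟩ := hδ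
  have hm0 : 0 < m := hm
  have hinj : Function.Injective fun i : Fin m => Int.fract (ξ i) := by
    intro i j h
    by_contra hne
    obtain ⟨z, hz⟩ := Int.fract_eq_fract.1 h
    apply hdist i j hne
    rw [hz, Int.fract_intCast]
  open Stmt3Aux in
  have hcard : ∀ x : ℝ, Nat.card {i : Fin m // Int.fract (ξ i - x) < δ}
      = (Stmt3Aux.AA hm0 hinj (x + δ) - Stmt3Aux.AA hm0 hinj x).toNat :=
    Stmt3Aux.card_eq hm0 hinj hδ0 hδ1
  have hfe : ∀ n : ℤ, f (Stmt3Aux.pp hm0 ξ n) = Stmt3Aux.pp hm0 ξ (Stmt3Aux.gg hm0 hinj δ n) :=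
    Stmt3Aux.f_eq_gg hm0 hinj hδ0 hδ1 hδne f hf
  have hgshift : ∀ n : ℤ, Stmt3Aux.gg hm0 hinj δ (n + m) = Stmt3Aux.gg hm0 hinj δ n + m :=
    Stmt3Aux.gg_shift hm0 hinj
  have hg1 : ∀ n : ℤ, Stmt3Aux.tt hm0 ξ (Stmt3Aux.gg hm0 hinj δ n) < Stmt3Aux.tt hm0 ξ n + δ :=
    Stmt3Aux.gg_lt hm0 hinj
  have hg2 : ∀ n : ℤ, Stmt3Aux.tt hm0 ξ n + δ < Stmt3Aux.tt hm0 ξ (Stmt3Aux.gg hm0 hinj δ n + 1) :=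
    Stmt3Aux.lt_gg_succ hm0 hinj (le_of_lt hδ0) hδ1 hδne
  have hg0 : 0 ≤ Stmt3Aux.gg hm0 hinj δ 0 := Stmt3Aux.gg_ge hm0 hinj hδ0 0
  constructor
  · rintro ⟨c, hc⟩
    have hstep : ∀ n : ℤ, Stmt3Aux.gg hm0 hinj δ n + 1 ≤ Stmt3Aux.gg hm0 hinj δ (n + 1) := by
      intro n
      by_contra hlt
      push_neg at hlt
      have hmono' : Stmt3Aux.gg hm0 hinj δ n ≤ Stmt3Aux.gg hm0 hinj δ (n + 1) :=
        Stmt3Aux.gg_mono hm0 hinj (by omega)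
      have hk : Stmt3Aux.gg hm0 hinj δ (n + 1) = Stmt3Aux.gg hm0 hinj δ n := by omega
      set k : ℤ := Stmt3Aux.gg hm0 hinj δ n with hkdef
      have e1 : Stmt3Aux.AA hm0 hinj (Stmt3Aux.tt hm0 ξ n + δ) = k + 1 := by
        have : Stmt3Aux.gg hm0 hinj δ n = Stmt3Aux.AA hm0 hinj (Stmt3Aux.tt hm0 ξ n + δ) - 1 := rfl
        omega
      have hd1 := hc (Stmt3Aux.tt hm0 ξ n)
      rw [hcard (Stmt3Aux.tt hm0 ξ n), Stmt3Aux.AA_tt hm0 hinj n, e1] at hd1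
      -- second interval
      have hx2 : Stmt3Aux.AA hm0 hinj (Stmt3Aux.tt hm0 ξ (k + 1) - δ + δ) = k + 1 := by
        rw [sub_add_cancel, Stmt3Aux.AA_tt hm0 hinj]
      have hxlow : Stmt3Aux.tt hm0 ξ (n + 1) < Stmt3Aux.tt hm0 ξ (k + 1) - δ := by
        have := hg2 (n + 1)
        rw [hk] at this
        linarith
      have hxA : n + 2 ≤ Stmt3Aux.AA hm0 hinj (Stmt3Aux.tt hm0 ξ (k + 1) - δ) := by
        have := (Stmt3Aux.lt_AA_iff hm0 hinj).2 hxlow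
        omega
      have hd2 := hc (Stmt3Aux.tt hm0 ξ (k + 1) - δ)
      rw [hcard (Stmt3Aux.tt hm0 ξ (k + 1) - δ), hx2] at hd2
      have hAmono2 : Stmt3Aux.AA hm0 hinj (Stmt3Aux.tt hm0 ξ (k + 1) - δ)
          ≤ Stmt3Aux.AA hm0 hinj (Stmt3Aux.tt hm0 ξ (k + 1) - δ + δ) :=
        Stmt3Aux.AA_mono hm0 hinj (by linarith)
      rw [hx2] at hAmono2
      have hkn : n ≤ k := Stmt3Aux.gg_ge hm0 hinj hδ0 n
      omega
    have hstep1 := Stmt3Aux.step_eq hm0 _ hgshift hstep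
    have hlin := Stmt3Aux.lin_of_step _ hstep1
    apply Function.Surjective.bijective_of_finite
    intro i
    refine ⟨Stmt3Aux.pp hm0 ξ (Stmt3Aux.nu ξ i - Stmt3Aux.gg hm0 hinj δ 0), ?_⟩
    rw [hfe, hlin]
    have : Stmt3Aux.nu ξ i - Stmt3Aux.gg hm0 hinj δ 0 + Stmt3Aux.gg hm0 hinj δ 0
        = Stmt3Aux.nu ξ i := by ring
    rw [this, Stmt3Aux.pp_nu]
  · intro hbij
    have hstep : ∀ n : ℤ, Stmt3Aux.gg hm0 hinj δ n + 1 ≤ Stmt3Aux.gg hm0 hinj δ (n + 1) := by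
      intro n
      rcases eq_or_lt_of_le (Stmt3Aux.gg_mono hm0 hinj (le_of_lt (by omega : n < n + 1)))
        with heq | hlt
      · exfalso
        have hfeq : f (Stmt3Aux.pp hm0 ξ n) = f (Stmt3Aux.pp hm0 ξ (n + 1)) := by
          rw [hfe, hfe, heq]
        have hppe := hbij.1 hfeq
        have hmod := (Stmt3Aux.pp_eq_iff hm0 hinj).1 hppe
        obtain ⟨z, hzz⟩ := Stmt3Aux.exists_mul_of_emod_eq hmod
        have hzm : z * (m : ℤ) = 1 := by omega
        have hm1 : (m : ℤ) = 1 := by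
          rcases Int.mul_eq_one_iff_eq_one_or_neg_one.1 hzm with ⟨h1, h2⟩ | ⟨h1, h2⟩
          · exact h2
          · omega
        have := hgshift n
        rw [hm1] at this
        omega
      · omega
    have hstep1 := Stmt3Aux.step_eq hm0 _ hgshift hstep
    have hlin := Stmt3Aux.lin_of_step _ hstep1
    refine ⟨(Stmt3Aux.gg hm0 hinj δ 0).toNat, ?_⟩
    intro x
    rw [hcard x]
    have hlow : Stmt3Aux.AA hm0 hinj x - 1 + Stmt3Aux.gg hm0 hinj δ 0
        < Stmt3Aux.AA hm0 hinj (x + δ) := by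
      have h1 : Stmt3Aux.gg hm0 hinj δ (Stmt3Aux.AA hm0 hinj x - 1)
          = Stmt3Aux.AA hm0 hinj x - 1 + Stmt3Aux.gg hm0 hinj δ 0 := hlin _
      have h2 := hg1 (Stmt3Aux.AA hm0 hinj x - 1)
      have h3 : Stmt3Aux.tt hm0 ξ (Stmt3Aux.AA hm0 hinj x - 1) < x :=
        (Stmt3Aux.lt_AA_iff hm0 hinj).1 (by omega)
      rw [h1] at h2
      exact (Stmt3Aux.lt_AA_iff hm0 hinj).2 (by linarith)
    have hhigh : Stmt3Aux.AA hm0 hinj (x + δ)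
        ≤ Stmt3Aux.AA hm0 hinj x + Stmt3Aux.gg hm0 hinj δ 0 + 1 := by
      rw [Stmt3Aux.AA_le_iff hm0 hinj]
      have h1 : Stmt3Aux.gg hm0 hinj δ (Stmt3Aux.AA hm0 hinj x)
          = Stmt3Aux.AA hm0 hinj x + Stmt3Aux.gg hm0 hinj δ 0 := hlin _
      have h2 := hg2 (Stmt3Aux.AA hm0 hinj x)
      rw [h1] at h2
      have h3 : x ≤ Stmt3Aux.tt hm0 ξ (Stmt3Aux.AA hm0 hinj x) :=
        (Stmt3Aux.AA_spec hm0 hinj x).1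
      have h4 : Stmt3Aux.AA hm0 hinj x + Stmt3Aux.gg hm0 hinj δ 0 + 1
          = Stmt3Aux.AA hm0 hinj x + Stmt3Aux.gg hm0 hinj δ 0 + 1 := rfl
      linarith
    omega
end

section
/- Let α ∈ (0,1) be irrational with continued fraction convergents p_k/q_k. For every L ≥ 1, the sum Σ_{t=0}^{∞} a_{L+2+2t} ‖q_{L+1+2t} α‖ equals ‖q_L α‖, where a_j are the partial quotients of α and ‖·‖ is the distance to the nearest integer. -/
/-- Gauss-map iterates of `α`. -/
noncomputable def cfFrac (α : ℝ) : ℕ → ℝ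
  | 0 => α
  | k + 1 => Int.fract (1 / cfFrac α k)

/-- Partial quotients of `α` (1-indexed, `cfA α 0 = 0` unused). -/
noncomputable def cfA (α : ℝ) : ℕ → ℕ
  | 0 => 0
  | k + 1 => (⌊1 / cfFrac α k⌋).toNat

/-- Numerators of the convergents of `α`. -/
noncomputable def cfP (α : ℝ) : ℕ → ℕ
  | 0 => 0
  | 1 => 1
  | k + 2 => cfA α (k + 2) * cfP α (k + 1) + cfP α k

/-- Denominators of the convergents of `α`. -/
noncomputable def cfQ (α : ℝ) : ℕ → ℕ
  | 0 => 1
  | 1 => cfA α 1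
  | k + 2 => cfA α (k + 2) * cfQ α (k + 1) + cfQ α k

/-- Distance from `x` to the nearest integer. -/
noncomputable def distNearInt (x : ℝ) : ℝ := min (Int.fract x) (1 - Int.fract x)

namespace CFAux

/-- The products of Gauss-map iterates. -/
noncomputable def beta (α : ℝ) (k : ℕ) : ℝ := ∏ i ∈ Finset.range (k + 1), cfFrac α i

variable {α : ℝ}

lemma frac_mem (hα : α ∈ Set.Ioo (0:ℝ) 1) (hirr : Irrational α) (k : ℕ) :
    cfFrac α k ∈ Set.Ioo (0:ℝ) 1 ∧ Irrational (cfFrac α k) := by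
  induction k with
  | zero => exact ⟨hα, hirr⟩
  | succ k ih =>
    obtain ⟨⟨h0, h1⟩, hi⟩ := ih
    have hinv : Irrational (1 / cfFrac α k) := by
      rw [one_div]; exact hi.inv
    have hfr : Irrational (Int.fract (1 / cfFrac α k)) := by
      rw [Int.fract]; exact hinv.sub_intCast _
    have hfr' : cfFrac α (k + 1) = Int.fract (1 / cfFrac α k) := rfl
    refine ⟨⟨?_, ?_⟩, by rw [hfr']; exact hfr⟩
    · rw [hfr']
      rcases lt_or_eq_of_le (Int.fract_nonneg (1 / cfFrac α k)) with h | h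
      · exact h
      · exact absurd h.symm (by simpa using hfr.ne_zero)
    · rw [hfr']; exact Int.fract_lt_one _

lemma frac_pos (hα : α ∈ Set.Ioo (0:ℝ) 1) (hirr : Irrational α) (k : ℕ) :
    0 < cfFrac α k := (frac_mem hα hirr k).1.1

lemma frac_lt_one (hα : α ∈ Set.Ioo (0:ℝ) 1) (hirr : Irrational α) (k : ℕ) :
    cfFrac α k < 1 := (frac_mem hα hirr k).1.2

lemma cfA_eq (hα : α ∈ Set.Ioo (0:ℝ) 1) (hirr : Irrational α) (k : ℕ) :
    (cfA α (k + 1) : ℝ) = 1 / cfFrac α k - cfFrac α (k + 1) := by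
  have h0 := frac_pos hα hirr k
  have h1 := frac_lt_one hα hirr k
  have hgt : (1:ℝ) < 1 / cfFrac α k := one_lt_one_div h0 h1
  have hfl : (0:ℤ) ≤ ⌊1 / cfFrac α k⌋ := by
    have : (1:ℤ) ≤ ⌊1 / cfFrac α k⌋ := Int.le_floor.2 (by exact_mod_cast hgt.le)
    omega
  have : (cfA α (k + 1) : ℝ) = (⌊1 / cfFrac α k⌋ : ℝ) := by
    have h := Int.toNat_of_nonneg hfl
    simp only [cfA]
    exact_mod_cast congrArg (fun z : ℤ => (z : ℝ)) h
  rw [this]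
  have : cfFrac α (k + 1) = Int.fract (1 / cfFrac α k) := rfl
  rw [this, Int.fract]
  ring

lemma cfA_pos (hα : α ∈ Set.Ioo (0:ℝ) 1) (hirr : Irrational α) (k : ℕ) :
    1 ≤ cfA α (k + 1) := by
  have h0 := frac_pos hα hirr k
  have h1 := frac_lt_one hα hirr k
  have hgt : (1:ℝ) < 1 / cfFrac α k := one_lt_one_div h0 h1
  have : (1:ℤ) ≤ ⌊1 / cfFrac α k⌋ := Int.le_floor.2 (by exact_mod_cast hgt.le)
  simp only [cfA]
  omega

/-- Key identity: `x_k * x_{k+1} = 1 - a_{k+1} * x_k`. -/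
lemma frac_mul_succ (hα : α ∈ Set.Ioo (0:ℝ) 1) (hirr : Irrational α) (k : ℕ) :
    cfFrac α k * cfFrac α (k + 1) = 1 - (cfA α (k + 1) : ℝ) * cfFrac α k := by
  have h0 := (frac_pos hα hirr k).ne'
  have h := cfA_eq hα hirr k
  field_simp at h ⊢
  nlinarith [h]

lemma frac_mul_lt_half (hα : α ∈ Set.Ioo (0:ℝ) 1) (hirr : Irrational α) (k : ℕ) :
    cfFrac α k * cfFrac α (k + 1) < 1 / 2 := by
  have h0 := frac_pos hα hirr k
  have h1 := frac_lt_one hα hirr k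
  have h0' := frac_pos hα hirr (k + 1)
  have h1' := frac_lt_one hα hirr (k + 1)
  have hA : (1:ℝ) ≤ (cfA α (k + 1) : ℝ) := by exact_mod_cast cfA_pos hα hirr k
  have hAe := cfA_eq hα hirr k
  -- a_{k+1} > 1/x_k - 1, so a x_k > 1 - x_k, so p = 1 - a x_k < x_k ; also p ≤ 1 - x_k
  have hAlt : (cfA α (k + 1) : ℝ) > 1 / cfFrac α k - 1 := by
    rw [hAe]; linarith
  have h2 : (cfA α (k + 1) : ℝ) * cfFrac α k > 1 - cfFrac α k := by
    have := mul_lt_mul_of_pos_right hAlt h0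
    rw [sub_mul, div_mul_cancel₀ 1 h0.ne'] at this
    linarith
  have h3 : (cfA α (k + 1) : ℝ) * cfFrac α k ≥ cfFrac α k := by nlinarith
  rw [frac_mul_succ hα hirr k]
  linarith

lemma beta_succ (k : ℕ) : beta α (k + 1) = beta α k * cfFrac α (k + 1) := by
  rw [beta, beta, Finset.prod_range_succ]

lemma beta_pos (hα : α ∈ Set.Ioo (0:ℝ) 1) (hirr : Irrational α) (k : ℕ) :
    0 < beta α k :=
  Finset.prod_pos fun i _ => frac_pos hα hirr i

lemma beta_le_one (hα : α ∈ Set.Ioo (0:ℝ) 1) (hirr : Irrational α) (k : ℕ) :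
    beta α k ≤ 1 :=
  Finset.prod_le_one (fun i _ => (frac_pos hα hirr i).le)
    (fun i _ => (frac_lt_one hα hirr i).le)

lemma beta_step2 (hα : α ∈ Set.Ioo (0:ℝ) 1) (hirr : Irrational α) (k : ℕ) :
    beta α (k + 2) < beta α k * (1 / 2) := by
  have h := frac_mul_lt_half hα hirr (k + 1)
  have hb := beta_pos hα hirr k
  rw [beta_succ, beta_succ, mul_assoc]
  exact mul_lt_mul_of_pos_left h hb

lemma beta_lt_half (hα : α ∈ Set.Ioo (0:ℝ) 1) (hirr : Irrational α) (k : ℕ)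
    (hk : 1 ≤ k) : beta α k < 1 / 2 := by
  match k, hk with
  | 1, _ =>
    have : beta α 1 = cfFrac α 0 * cfFrac α 1 := by
      rw [beta_succ]; simp [beta]
    rw [this]; exact frac_mul_lt_half hα hirr 0
  | (k + 2), _ =>
    have h := beta_step2 hα hirr k
    have := beta_le_one hα hirr k
    nlinarith [beta_pos hα hirr k]

/-- The recurrence `β_{k+2} = β_k - a_{k+2} β_{k+1}`. -/
lemma beta_rec (hα : α ∈ Set.Ioo (0:ℝ) 1) (hirr : Irrational α) (k : ℕ) :
    beta α (k + 2) = beta α k - (cfA α (k + 2) : ℝ) * beta α (k + 1) := by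
  have h := frac_mul_succ hα hirr (k + 1)
  rw [beta_succ, beta_succ, mul_assoc, h]
  ring

/-- `q_k α - p_k = (-1)^k β_k`. -/
lemma e_eq (hα : α ∈ Set.Ioo (0:ℝ) 1) (hirr : Irrational α) (k : ℕ) :
    (cfQ α k : ℝ) * α - (cfP α k : ℝ) = (-1) ^ k * beta α k := by
  induction k using Nat.strong_induction_on with
  | _ k ih =>
    match k with
    | 0 => simp [cfQ, cfP, beta, cfFrac]
    | 1 =>
      have hA := cfA_eq hα hirr 0
      have hb : beta α 1 = cfFrac α 0 * cfFrac α 1 := by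
        rw [beta_succ]; simp [beta]
      have hx0 : cfFrac α 0 = α := rfl
      have h0 : (0:ℝ) < α := hα.1
      simp only [cfQ, cfP, hb, hx0, pow_one]
      rw [hA, hx0]
      field_simp
      push_cast; ring
    | (k + 2) =>
      have h1 := ih (k + 1) (by omega)
      have h0 := ih k (by omega)
      have hr := beta_rec hα hirr k
      simp only [cfQ, cfP]
      push_cast
      rw [hr]
      have hpow : ((-1:ℝ)) ^ (k + 2) = (-1) ^ k := by
        rw [pow_succ, pow_succ]; ring
      have hpow1 : ((-1:ℝ)) ^ (k + 1) = -(-1) ^ k := by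
        rw [pow_succ]; ring
      rw [hpow]
      rw [hpow1] at h1
      linear_combination (cfA α (k + 2) : ℝ) * h1 + h0

lemma dist_eq (hα : α ∈ Set.Ioo (0:ℝ) 1) (hirr : Irrational α) (k : ℕ) (hk : 1 ≤ k) :
    distNearInt ((cfQ α k : ℝ) * α) = beta α k := by
  have he := e_eq hα hirr k
  have hb0 := beta_pos hα hirr k
  have hb2 := beta_lt_half hα hirr k hk
  rcases Nat.even_or_odd k with hev | hod
  · have hs : ((-1:ℝ)) ^ k = 1 := hev.neg_one_pow
    rw [hs, one_mul] at he
    have hq : (cfQ α k : ℝ) * α = ((cfP α k : ℤ) : ℝ) + beta α k := by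
      push_cast; linarith
    have hfr : Int.fract ((cfQ α k : ℝ) * α) = beta α k := by
      rw [hq, Int.fract_intCast_add, Int.fract_eq_self.2 ⟨hb0.le, by linarith⟩]
    rw [distNearInt, hfr]
    exact min_eq_left (by linarith)
  · have hs : ((-1:ℝ)) ^ k = -1 := hod.neg_one_pow
    rw [hs] at he
    have hq : (cfQ α k : ℝ) * α = ((cfP α k : ℤ) : ℝ) + (- beta α k) := by
      push_cast; linarith
    have hfr : Int.fract ((cfQ α k : ℝ) * α) = 1 - beta α k := by
      rw [hq, Int.fract_intCast_add, Int.fract_neg, Int.fract_eq_self.2 ⟨hb0.le, by linarith⟩]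
      rw [Int.fract_eq_self.2 ⟨hb0.le, by linarith⟩]
      exact hb0.ne'
    rw [distNearInt, hfr]
    have : 1 - (1 - beta α k) = beta α k := by ring
    rw [this]
    exact min_eq_right (by linarith)

lemma beta_tendsto (hα : α ∈ Set.Ioo (0:ℝ) 1) (hirr : Irrational α) (L : ℕ) :
    Filter.Tendsto (fun n => beta α (L + 2 * n)) Filter.atTop (nhds 0) := by
  have hbound : ∀ n, beta α (L + 2 * n) ≤ (1 / 2 : ℝ) ^ n := by
    intro n
    induction n with
    | zero => simpa using beta_le_one hα hirr L
    | succ n ihn =>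
      have h2 : L + 2 * (n + 1) = (L + 2 * n) + 2 := by omega
      rw [h2]
      have := beta_step2 hα hirr (L + 2 * n)
      have hp : (0:ℝ) < (1/2:ℝ) ^ n := by positivity
      calc beta α ((L + 2 * n) + 2) ≤ beta α (L + 2 * n) * (1 / 2) := this.le
        _ ≤ (1/2:ℝ) ^ n * (1/2) := by nlinarith
        _ = (1/2:ℝ) ^ (n + 1) := by rw [pow_succ]
  have hgeo : Filter.Tendsto (fun n : ℕ => (1/2:ℝ) ^ n) Filter.atTop (nhds 0) :=
    tendsto_pow_atTop_nhds_zero_of_lt_one (by norm_num) (by norm_num)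
  exact squeeze_zero (fun n => (beta_pos hα hirr _).le) hbound hgeo

end CFAux

theorem stmt6 (α : ℝ) (hα : α ∈ Set.Ioo (0:ℝ) 1) (hirr : Irrational α) (L : ℕ) (hL : 1 ≤ L) :
    (∑' t : ℕ, (cfA α (L + 2 + 2 * t) : ℝ) * distNearInt ((cfQ α (L + 1 + 2 * t) : ℝ) * α)) =
      distNearInt ((cfQ α L : ℝ) * α) := by
  open CFAux in
  have hterm : ∀ t : ℕ, (cfA α (L + 2 + 2 * t) : ℝ) * distNearInt ((cfQ α (L + 1 + 2 * t) : ℝ) * α)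
      = beta α (L + 2 * t) - beta α (L + 2 * (t + 1)) := by
    intro t
    have hd : distNearInt ((cfQ α (L + 1 + 2 * t) : ℝ) * α) = beta α (L + 1 + 2 * t) :=
      dist_eq hα hirr _ (by omega)
    rw [hd]
    have hr := beta_rec hα hirr (L + 2 * t)
    have h1 : L + 2 * t + 2 = L + 2 * (t + 1) := by omega
    have h2 : L + 2 * t + 1 = L + 1 + 2 * t := by omega
    have h3 : L + 2 + 2 * t = L + 2 * t + 2 := by omega
    rw [h1, h2] at hr
    rw [h3, h1]
    linarith
  have hnonneg : ∀ t : ℕ, 0 ≤ (cfA α (L + 2 + 2 * t) : ℝ) * distNearInt ((cfQ α (L + 1 + 2 * t) : ℝ) * α) := by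
    intro t
    rw [hterm t]
    have hr := CFAux.beta_rec hα hirr (L + 2 * t)
    have h1 : L + 2 * t + 2 = L + 2 * (t + 1) := by omega
    rw [h1] at hr
    have hAnn : (0:ℝ) ≤ (cfA α (L + 2 * t + 2) : ℝ) := by positivity
    nlinarith [CFAux.beta_pos hα hirr (L + 2 * t + 1)]
  have hdL : distNearInt ((cfQ α L : ℝ) * α) = CFAux.beta α L := CFAux.dist_eq hα hirr L hL
  rw [hdL]
  have hsum : HasSum (fun t : ℕ => (cfA α (L + 2 + 2 * t) : ℝ) * distNearInt ((cfQ α (L + 1 + 2 * t) : ℝ) * α)) (CFAux.beta α L) := by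
    rw [hasSum_iff_tendsto_nat_of_nonneg hnonneg]
    have hps : ∀ n : ℕ, (∑ t ∈ Finset.range n, (cfA α (L + 2 + 2 * t) : ℝ) * distNearInt ((cfQ α (L + 1 + 2 * t) : ℝ) * α))
        = CFAux.beta α L - CFAux.beta α (L + 2 * n) := by
      intro n
      have : (∑ t ∈ Finset.range n, (cfA α (L + 2 + 2 * t) : ℝ) * distNearInt ((cfQ α (L + 1 + 2 * t) : ℝ) * α))
          = ∑ t ∈ Finset.range n, ((fun s => CFAux.beta α (L + 2 * s)) t - (fun s => CFAux.beta α (L + 2 * s)) (t + 1)) :=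
        Finset.sum_congr rfl fun t _ => hterm t
      rw [this, Finset.sum_range_sub' (fun s => CFAux.beta α (L + 2 * s))]
      simp
    simp only [hps]
    have := (CFAux.beta_tendsto hα hirr L).const_sub (CFAux.beta α L)
    simpa using this
  exact hsum.tsum_eq
end

section
/- Let α ∈ (0,1) be irrational and let n ≥ 1 have Ostrowski representation (with respect to α) whose lowest nonzero digit has index L = k_0(n). Then ‖nα‖ > ‖q_{L+1}α‖, where q_k are the denominators of the convergents of α and ‖·‖ is the distance to the nearest integer. -/
/-- `b` is the sequence of digits of an Ostrowski representation of `n` w.r.t. `α`: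
`n = Σ b_k q_k` with `0 ≤ b_0 ≤ a_1 - 1`, `0 ≤ b_k ≤ a_{k+1}` for `k ≥ 1`, and
`b_{k-1} = 0` whenever `b_k = a_{k+1}`. -/
def OstrowskiRep (α : ℝ) (n : ℕ) (b : ℕ → ℕ) : Prop :=
  b 0 ≤ cfA α 1 - 1 ∧
  (∀ k, 1 ≤ k → b k ≤ cfA α (k + 1)) ∧
  (∀ k, 1 ≤ k → b k = cfA α (k + 1) → b (k - 1) = 0) ∧
  ∃ N, (∀ k, N < k → b k = 0) ∧ n = ∑ k ∈ Finset.range (N + 1), b k * cfQ α k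

namespace Ost


noncomputable def B (α : ℝ) (k : ℕ) : ℝ := ∏ i ∈ Finset.range (k+1), cfFrac α i

lemma cf_basic {α : ℝ} (hα : α ∈ Set.Ioo (0:ℝ) 1) (hirr : Irrational α) (k : ℕ) :
    (0 < cfFrac α k ∧ cfFrac α k < 1) ∧ Irrational (cfFrac α k) := by
  induction k with
  | zero => exact ⟨⟨hα.1, hα.2⟩, hirr⟩
  | succ k ih =>
    have h0 := ih.1.1
    have hinv : Irrational (1 / cfFrac α k) := by
      rw [one_div]; exact ih.2.inv
    have hf : cfFrac α (k+1) = Int.fract (1 / cfFrac α k) := rfl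
    have hfi : Irrational (Int.fract (1 / cfFrac α k)) := by
      rw [Int.fract]; exact hinv.sub_intCast _
    refine ⟨⟨?_, ?_⟩, by rw [hf]; exact hfi⟩
    · rw [hf]
      rcases lt_or_eq_of_le (Int.fract_nonneg (1 / cfFrac α k)) with h | h
      · exact h
      · exact absurd (h ▸ hfi) (by simpa using not_irrational_zero)
    · rw [hf]; exact Int.fract_lt_one _

lemma floor_one_le {α : ℝ} (hα : α ∈ Set.Ioo (0:ℝ) 1) (hirr : Irrational α) (k : ℕ) :
    1 ≤ ⌊1 / cfFrac α k⌋ := by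
  have h := (cf_basic hα hirr k).1
  have : (1:ℝ) < 1 / cfFrac α k := (one_lt_one_div h.1 h.2)
  exact Int.le_floor.2 (by exact_mod_cast this.le)

lemma cfA_one_le {α : ℝ} (hα : α ∈ Set.Ioo (0:ℝ) 1) (hirr : Irrational α) (k : ℕ) :
    1 ≤ cfA α (k+1) := by
  have := floor_one_le hα hirr k
  simp only [cfA]
  omega

lemma cfA_cast {α : ℝ} (hα : α ∈ Set.Ioo (0:ℝ) 1) (hirr : Irrational α) (k : ℕ) :
    ((cfA α (k+1) : ℕ) : ℝ) = (⌊1 / cfFrac α k⌋ : ℝ) := by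
  have h := floor_one_le hα hirr k
  simp only [cfA]
  have h2 : (⌊1 / cfFrac α k⌋.toNat : ℤ) = ⌊1 / cfFrac α k⌋ := Int.toNat_of_nonneg (by omega)
  exact_mod_cast congrArg (fun z : ℤ => (z : ℝ)) h2

lemma key {α : ℝ} (hα : α ∈ Set.Ioo (0:ℝ) 1) (hirr : Irrational α) (k : ℕ) :
    (cfA α (k+1) : ℝ) + cfFrac α (k+1) = 1 / cfFrac α k := by
  rw [cfA_cast hα hirr k]
  have hf : cfFrac α (k+1) = Int.fract (1 / cfFrac α k) := rfl
  rw [hf, Int.fract]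
  ring

lemma B_pos {α : ℝ} (hα : α ∈ Set.Ioo (0:ℝ) 1) (hirr : Irrational α) (k : ℕ) :
    0 < B α k :=
  Finset.prod_pos fun i _ => (cf_basic hα hirr i).1.1

lemma B_succ (α : ℝ) (k : ℕ) : B α (k+1) = B α k * cfFrac α (k+1) :=
  Finset.prod_range_succ _ _

lemma B_lt {α : ℝ} (hα : α ∈ Set.Ioo (0:ℝ) 1) (hirr : Irrational α) (k : ℕ) :
    B α (k+1) < B α k := by
  rw [B_succ]
  exact mul_lt_of_lt_one_right (B_pos hα hirr k) (cf_basic hα hirr (k+1)).1.2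

lemma B_anti {α : ℝ} (hα : α ∈ Set.Ioo (0:ℝ) 1) (hirr : Irrational α) :
    StrictAnti (B α) :=
  strictAnti_nat_of_succ_lt (B_lt hα hirr)

lemma B_rec {α : ℝ} (hα : α ∈ Set.Ioo (0:ℝ) 1) (hirr : Irrational α) (k : ℕ) :
    B α k = (cfA α (k+2) : ℝ) * B α (k+1) + B α (k+2) := by
  have hk := key hα hirr (k+1)
  have ht := (cf_basic hα hirr (k+1)).1.1
  rw [B_succ, B_succ, B_succ]
  field_simp at hk
  nlinarith [B_pos hα hirr k]

lemma B_one_eq {α : ℝ} (hα : α ∈ Set.Ioo (0:ℝ) 1) (hirr : Irrational α) :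
    (cfA α 1 : ℝ) * B α 0 + B α 1 = 1 := by
  have hk := key hα hirr 0
  have ht : B α 0 = cfFrac α 0 := Finset.prod_range_one (f := cfFrac α)
  have ht0 := (cf_basic hα hirr 0).1.1
  rw [B_succ, ht]
  field_simp at hk
  nlinarith


end Ost

namespace Ost


lemma theta {α : ℝ} (hα : α ∈ Set.Ioo (0:ℝ) 1) (hirr : Irrational α) (k : ℕ) :
    (cfQ α k : ℝ) * α - (cfP α k : ℝ) = (-1)^k * B α k := by
  have B0 : B α 0 = α := by
    have : B α 0 = cfFrac α 0 := Finset.prod_range_one (f := cfFrac α)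
    simpa [cfFrac] using this
  have base0 : (cfQ α 0 : ℝ) * α - (cfP α 0 : ℝ) = (-1)^0 * B α 0 := by
    simp [cfQ, cfP, B0]
  have base1 : (cfQ α 1 : ℝ) * α - (cfP α 1 : ℝ) = (-1)^1 * B α 1 := by
    have hk := key hα hirr 0
    have ht0 := (cf_basic hα hirr 0).1.1
    have hB1 : B α 1 = B α 0 * cfFrac α 1 := B_succ α 0
    have hB0 : B α 0 = cfFrac α 0 := Finset.prod_range_one (f := cfFrac α)
    have hα0 : cfFrac α 0 = α := rfl
    field_simp at hk
    simp only [cfQ, cfP, pow_one, hB1, hB0, hα0, Nat.cast_one]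
    rw [hα0] at hk
    linear_combination hk
  have H : ∀ k, ((cfQ α k : ℝ) * α - (cfP α k : ℝ) = (-1)^k * B α k) ∧
      ((cfQ α (k+1) : ℝ) * α - (cfP α (k+1) : ℝ) = (-1)^(k+1) * B α (k+1)) := by
    intro k
    induction k with
    | zero => exact ⟨base0, base1⟩
    | succ k ih =>
      refine ⟨ih.2, ?_⟩
      have hrec := B_rec hα hirr k
      have e1 := ih.1
      have e2 := ih.2
      have hq : (cfQ α (k+2) : ℝ) = (cfA α (k+2) : ℝ) * cfQ α (k+1) + cfQ α k := by
        simp [cfQ]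
      have hp : (cfP α (k+2) : ℝ) = (cfA α (k+2) : ℝ) * cfP α (k+1) + cfP α k := by
        simp [cfP]
      have hpow : ((-1:ℝ))^(k+2) = (-1)^k := by ring
      have hpow1 : ((-1:ℝ))^(k+1) = -(-1)^k := by ring
      rw [hq, hp, hpow]
      rw [hpow1] at e2
      linear_combination (cfA α (k+2) : ℝ) * e2 + e1 + (-1:ℝ)^k * hrec
  exact (H k).1

lemma B_one_lt_half {α : ℝ} (hα : α ∈ Set.Ioo (0:ℝ) 1) (hirr : Irrational α) :
    B α 1 < 1/2 := by
  have h1 := B_one_eq hα hirr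
  have ha := cfA_one_le hα hirr 0
  have hB0 := B_pos hα hirr 0
  have hlt := B_lt hα hirr 0
  have : (1:ℝ) ≤ (cfA α 1 : ℝ) := by exact_mod_cast ha
  nlinarith

lemma B0_add_B1_le_one {α : ℝ} (hα : α ∈ Set.Ioo (0:ℝ) 1) (hirr : Irrational α) :
    B α 0 + B α 1 ≤ 1 := by
  have h1 := B_one_eq hα hirr
  have ha := cfA_one_le hα hirr 0
  have hB0 := B_pos hα hirr 0
  have : (1:ℝ) ≤ (cfA α 1 : ℝ) := by exact_mod_cast ha
  nlinarith

lemma B_lt_half {α : ℝ} (hα : α ∈ Set.Ioo (0:ℝ) 1) (hirr : Irrational α) (k : ℕ)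
    (hk : 1 ≤ k) : B α k < 1/2 :=
  lt_of_le_of_lt ((B_anti hα hirr).antitone hk) (B_one_lt_half hα hirr)

lemma dni_eq (m : ℤ) (y : ℝ) (h0 : 0 < y) (h1 : y < 1) :
    distNearInt ((m:ℝ) + y) = min y (1 - y) := by
  unfold distNearInt
  rw [Int.fract_intCast_add, Int.fract_eq_self.2 ⟨h0.le, h1⟩]


end Ost

namespace Ost


noncomputable def U (α : ℝ) (b : ℕ → ℕ) (N m : ℕ) : ℝ :=
  (-1:ℝ)^m * ∑ k ∈ Finset.Icc m N, (b k : ℝ) * ((-1:ℝ)^k * B α k)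

lemma U_empty (α : ℝ) (b : ℕ → ℕ) (N m : ℕ) (h : N < m) : U α b N m = 0 := by
  rw [U, Finset.Icc_eq_empty (by omega)]
  simp

lemma U_step (α : ℝ) (b : ℕ → ℕ) (N : ℕ) (hN : ∀ k, N < k → b k = 0) (m : ℕ) :
    U α b N m = (b m : ℝ) * B α m - U α b N (m+1) := by
  by_cases hm : m ≤ N
  · have hins : Finset.Icc m N = insert m (Finset.Icc (m+1) N) := by
      ext x; simp only [Finset.mem_Icc, Finset.mem_insert]; omega
    rw [U, U, hins, Finset.sum_insert (by simp), mul_add]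
    have h1 : ((-1:ℝ))^m * ((-1:ℝ))^m = 1 := by
      rw [← mul_pow]; norm_num
    have h2 : ((-1:ℝ))^(m+1) = -((-1:ℝ))^m := by ring
    rw [h2]
    linear_combination ((b m : ℝ) * B α m) * h1
  · rw [U_empty α b N m (by omega), U_empty α b N (m+1) (by omega), hN m (by omega)]
    simp

lemma U_bounds {α : ℝ} (hα : α ∈ Set.Ioo (0:ℝ) 1) (hirr : Irrational α)
    (b : ℕ → ℕ) (N : ℕ) (hble : ∀ k, 1 ≤ k → b k ≤ cfA α (k + 1))
    (hN : ∀ k, N < k → b k = 0) :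
    ∀ j, U α b N (j+1) < B α j ∧ -B α (j+1) < U α b N (j+1) := by
  suffices h : ∀ d j, N + 1 ≤ (j+1) + d → U α b N (j+1) < B α j ∧ -B α (j+1) < U α b N (j+1) by
    intro j; exact h (N+1) j (by omega)
  intro d
  induction d with
  | zero =>
    intro j hj
    rw [U_empty α b N (j+1) (by omega)]
    exact ⟨B_pos hα hirr j, by have := B_pos hα hirr (j+1); linarith⟩
  | succ d ih =>
    intro j hj
    by_cases hjN : N < j + 1
    · rw [U_empty α b N (j+1) (by omega)]
      exact ⟨B_pos hα hirr j, by have := B_pos hα hirr (j+1); linarith⟩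
    · obtain ⟨ihu, ihl⟩ := ih (j+1) (by omega)
      have hstep := U_step α b N hN (j+1)
      have hcast : ((b (j+1) : ℕ) : ℝ) ≤ (cfA α (j+2) : ℝ) := by
        exact_mod_cast hble (j+1) (by omega)
      have hrec := B_rec hα hirr j
      have hBpos := B_pos hα hirr (j+1)
      have hbpos : (0:ℝ) ≤ (b (j+1) : ℝ) := Nat.cast_nonneg _
      constructor
      · nlinarith
      · nlinarith

end Ost

namespace Ost


lemma dni_sub (m : ℤ) (y : ℝ) (h0 : 0 < y) (h1 : y < 1) :
    distNearInt ((m:ℝ) - y) = min y (1 - y) := by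
  have h : (m:ℝ) - y = ((m - 1 : ℤ) : ℝ) + (1 - y) := by push_cast; ring
  rw [h, dni_eq _ _ (by linarith) (by linarith),
    show (1:ℝ) - (1 - y) = y by ring, min_comm]


end Ost

theorem stmt7 (α : ℝ) (hα : α ∈ Set.Ioo (0:ℝ) 1) (hirr : Irrational α)
    (n : ℕ) (hn : 1 ≤ n) (b : ℕ → ℕ) (hb : OstrowskiRep α n b)
    (L : ℕ) (hL : b L ≠ 0) (hL0 : ∀ k, k < L → b k = 0) :
    distNearInt ((cfQ α (L + 1) : ℝ) * α) < distNearInt ((n : ℝ) * α) := by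
  classical
  obtain ⟨hb0, hble, hcarry, N, hN, hsum⟩ := hb
  have hLN : L ≤ N := by
    by_contra h
    exact hL (hN L (by omega))
  have hUb := Ost.U_bounds hα hirr b N hble hN
  have hstepL := Ost.U_step α b N hN L
  have hstepL1 := Ost.U_step α b N hN (L+1)
  -- b (L+1) is not maximal
  have hbL1 : b (L+1) + 1 ≤ cfA α (L+2) := by
    have h1 : b (L+1) ≤ cfA α (L+2) := hble (L+1) (by omega)
    rcases eq_or_lt_of_le h1 with h | h
    · exact absurd (hcarry (L+1) (by omega) h) (by simpa using hL)
    · omega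
  have hbL1c : ((b (L+1) : ℕ) : ℝ) + 1 ≤ (cfA α (L+2) : ℝ) := by exact_mod_cast hbL1
  have hrecL := Ost.B_rec hα hirr L
  have hBL1pos := Ost.B_pos hα hirr (L+1)
  have hBL2pos := Ost.B_pos hα hirr (L+2)
  have hBLpos := Ost.B_pos hα hirr L
  have hUL2 := (hUb (L+1)).2
  -- upper bound on U (L+1)
  have hU1u : Ost.U α b N (L+1) < Ost.B α L - Ost.B α (L+1) := by nlinarith
  have hU1l : -Ost.B α (L+1) < Ost.U α b N (L+1) := (hUb L).2
  have hbLc : (1:ℝ) ≤ ((b L : ℕ) : ℝ) := by exact_mod_cast Nat.one_le_iff_ne_zero.2 hL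
  have goal1 : Ost.B α (L+1) < Ost.U α b N L := by nlinarith
  have goal2 : Ost.U α b N L < 1 - Ost.B α (L+1) := by
    have hB01 := Ost.B0_add_B1_le_one hα hirr
    match L, hstepL, hU1l, goal1, hrecL, hbLc with
    | 0, hstepL, hU1l, goal1, hrecL, hbLc =>
      have ha1 : 1 ≤ cfA α 1 := Ost.cfA_one_le hα hirr 0
      have hb0c : ((b 0 : ℕ) : ℝ) + 1 ≤ (cfA α 1 : ℝ) := by
        have : b 0 + 1 ≤ cfA α 1 := by omega
        exact_mod_cast this
      have hone := Ost.B_one_eq hα hirr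
      have hB0pos := Ost.B_pos hα hirr 0
      have hlt01 := Ost.B_lt hα hirr 0
      nlinarith
    | (L'+1), hstepL, hU1l, goal1, hrecL, hbLc =>
      have hupper := (hUb L').1
      have h1 : Ost.B α L' ≤ Ost.B α 0 := (Ost.B_anti hα hirr).antitone (by omega)
      have h2 : Ost.B α (L'+2) ≤ Ost.B α 1 := (Ost.B_anti hα hirr).antitone (by omega)
      linarith
  have hU0 : 0 < Ost.U α b N L := lt_trans hBL1pos goal1
  have hU1 : Ost.U α b N L < 1 := by linarith
  -- express n * α
  set M : ℕ := ∑ k ∈ Finset.Icc L N, b k * cfP α k with hM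
  have hna : (n:ℝ) * α = ((M : ℤ) : ℝ) + (-1:ℝ)^L * Ost.U α b N L := by
    have hre : ∀ f : ℕ → ℝ,
        ∑ k ∈ Finset.range (N+1), (b k : ℝ) * f k = ∑ k ∈ Finset.Icc L N, (b k : ℝ) * f k := by
      intro f
      refine (Finset.sum_subset ?_ ?_).symm
      · intro x hx
        simp only [Finset.mem_Icc] at hx
        simp only [Finset.mem_range]
        omega
      · intro x hx hx2
        simp only [Finset.mem_range] at hx
        simp only [Finset.mem_Icc, not_and, not_le] at hx2
        have hbx : b x = 0 := by
          by_cases hxL : x < L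
          · exact hL0 x hxL
          · exact absurd (hx2 (by omega)) (by omega)
        simp [hbx]
    have h1 : (n:ℝ) * α = ∑ k ∈ Finset.range (N+1), (b k : ℝ) * ((cfQ α k : ℝ) * α) := by
      rw [hsum]
      push_cast
      rw [Finset.sum_mul]
      exact Finset.sum_congr rfl fun k _ => by ring
    have h2 : ∀ k, (cfQ α k : ℝ) * α = (cfP α k : ℝ) + (-1:ℝ)^k * Ost.B α k := by
      intro k
      have := Ost.theta hα hirr k
      linarith
    rw [h1]
    simp_rw [h2, mul_add, Finset.sum_add_distrib, hre]
    have hMc : ((M : ℤ) : ℝ) = ∑ k ∈ Finset.Icc L N, (b k : ℝ) * (cfP α k : ℝ) := by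
      rw [hM]; push_cast; ring
    have hUc : ∑ k ∈ Finset.Icc L N, (b k : ℝ) * ((-1:ℝ)^k * Ost.B α k)
        = (-1:ℝ)^L * Ost.U α b N L := by
      rw [Ost.U, ← mul_assoc, ← mul_pow]
      norm_num
    rw [hMc, hUc]
  have hqa : (cfQ α (L+1) : ℝ) * α
      = ((cfP α (L+1) : ℤ) : ℝ) + (-1:ℝ)^(L+1) * Ost.B α (L+1) := by
    have := Ost.theta hα hirr (L+1)
    push_cast
    linarith
  have hBhalf := Ost.B_lt_half hα hirr (L+1) (by omega)
  have hdn : distNearInt ((n:ℝ) * α) = min (Ost.U α b N L) (1 - Ost.U α b N L) := by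
    rcases Nat.even_or_odd L with hE | hO
    · rw [hna, hE.neg_one_pow, one_mul]
      exact Ost.dni_eq _ _ hU0 hU1
    · rw [hna, hO.neg_one_pow]
      rw [show ((M : ℤ) : ℝ) + (-1) * Ost.U α b N L = ((M : ℤ) : ℝ) - Ost.U α b N L by ring]
      exact Ost.dni_sub _ _ hU0 hU1
  have hdq : distNearInt ((cfQ α (L+1) : ℝ) * α) = Ost.B α (L+1) := by
    have hB1lt : Ost.B α (L+1) < 1 := by linarith
    have hmm : min (Ost.B α (L+1)) (1 - Ost.B α (L+1)) = Ost.B α (L+1) :=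
      min_eq_left (by linarith)
    rcases Nat.even_or_odd (L+1) with hE | hO
    · rw [hqa, hE.neg_one_pow, one_mul, Ost.dni_eq _ _ hBL1pos hB1lt, hmm]
    · rw [hqa, hO.neg_one_pow]
      rw [show ((cfP α (L+1) : ℤ) : ℝ) + (-1) * Ost.B α (L+1)
          = ((cfP α (L+1) : ℤ) : ℝ) - Ost.B α (L+1) by ring]
      rw [Ost.dni_sub _ _ hBL1pos hB1lt, hmm]
  rw [hdn, hdq]
  exact lt_min goal1 (by linarith)
end

section
/- Let α ∈ (0,1) be irrational and let n ≥ 1 have Ostrowski representation with lowest nonzero digit at index L = k_0(n). If L ≥ 2 (or L ≥ 1 in case α < 1/2), then ‖nα‖ < ‖q_{L−1}α‖. -/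
namespace OstAux

/-- The signed error `q_k α - p_k`. -/
noncomputable def cfD (α : ℝ) (k : ℕ) : ℝ := (cfQ α k : ℝ) * α - (cfP α k : ℝ)

lemma basic (α : ℝ) (hα : α ∈ Set.Ioo (0:ℝ) 1) (hirr : Irrational α) (k : ℕ) :
    0 < cfFrac α k ∧ cfFrac α k < 1 ∧ Irrational (cfFrac α k) := by
  induction k with
  | zero => exact ⟨hα.1, hα.2, hirr⟩
  | succ k ih =>
    obtain ⟨h0, h1, hi⟩ := ih
    have hinv : Irrational (1 / cfFrac α k) := by rw [one_div]; exact hi.inv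
    have hf : Irrational (Int.fract (1 / cfFrac α k)) := by
      rw [Int.fract]; exact hinv.sub_intCast _
    have hrw : cfFrac α (k+1) = Int.fract (1 / cfFrac α k) := rfl
    refine ⟨?_, ?_, ?_⟩
    · rw [hrw]
      rcases (Int.fract_nonneg (1 / cfFrac α k)).lt_or_eq with h | h
      · exact h
      · exact absurd (h ▸ hf) (by simpa using not_irrational_zero)
    · rw [hrw]; exact Int.fract_lt_one _
    · rw [hrw]; exact hf

lemma one_le_cfA (α : ℝ) (hα : α ∈ Set.Ioo (0:ℝ) 1) (hirr : Irrational α) (k : ℕ) :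
    1 ≤ cfA α (k+1) := by
  obtain ⟨h0, h1, _⟩ := basic α hα hirr k
  have : (1:ℝ) ≤ 1 / cfFrac α k := by
    rw [le_div_iff₀ h0]; linarith
  have hfl : (1:ℤ) ≤ ⌊1 / cfFrac α k⌋ := by
    exact_mod_cast Int.le_floor.mpr (by exact_mod_cast this)
  show 1 ≤ (⌊1 / cfFrac α k⌋).toNat
  omega

lemma cfA_cast (α : ℝ) (hα : α ∈ Set.Ioo (0:ℝ) 1) (hirr : Irrational α) (k : ℕ) :
    ((cfA α (k+1) : ℝ)) = (⌊1 / cfFrac α k⌋ : ℝ) := by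
  obtain ⟨h0, h1, _⟩ := basic α hα hirr k
  have : (1:ℝ) ≤ 1 / cfFrac α k := by
    rw [le_div_iff₀ h0]; linarith
  have hfl : (0:ℤ) ≤ ⌊1 / cfFrac α k⌋ := Int.le_floor.mpr (by exact_mod_cast le_trans zero_le_one this)
  show (((⌊1 / cfFrac α k⌋).toNat : ℝ)) = _
  exact_mod_cast Int.toNat_of_nonneg hfl

lemma cfA_add_frac (α : ℝ) (hα : α ∈ Set.Ioo (0:ℝ) 1) (hirr : Irrational α) (k : ℕ) :
    (cfA α (k+1) : ℝ) + cfFrac α (k+1) = 1 / cfFrac α k := by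
  have hrw : cfFrac α (k+1) = Int.fract (1 / cfFrac α k) := rfl
  rw [hrw, cfA_cast α hα hirr k, Int.fract]
  ring

lemma cfD_zero (α : ℝ) : cfD α 0 = α := by simp [cfD, cfQ, cfP]

lemma cfD_rec (α : ℝ) (k : ℕ) :
    cfD α (k+2) = (cfA α (k+2) : ℝ) * cfD α (k+1) + cfD α k := by
  show ((cfQ α (k+2) : ℝ)) * α - (cfP α (k+2) : ℝ) = _
  rw [show cfQ α (k+2) = cfA α (k + 2) * cfQ α (k + 1) + cfQ α k from rfl,
      show cfP α (k+2) = cfA α (k + 2) * cfP α (k + 1) + cfP α k from rfl]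
  push_cast
  unfold cfD
  ring

lemma cfD_succ (α : ℝ) (hα : α ∈ Set.Ioo (0:ℝ) 1) (hirr : Irrational α) (k : ℕ) :
    cfD α (k+1) = -(cfFrac α (k+1)) * cfD α k := by
  induction k with
  | zero =>
    have h0 : cfFrac α 0 = α := rfl
    have hkey : ((cfA α 1 : ℝ) + cfFrac α 1) * α = 1 := by
      have h2 := cfA_add_frac α hα hirr 0
      rw [h0] at h2
      rw [h2]
      field_simp [ne_of_gt hα.1]
    have hD1 : cfD α 1 = (cfA α 1 : ℝ) * α - 1 := by simp [cfD, cfQ, cfP]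
    rw [hD1, cfD_zero]
    show (cfA α 1 : ℝ) * α - 1 = -cfFrac α 1 * α
    linear_combination hkey
  | succ k ih =>
    have hne : cfFrac α (k+1) ≠ 0 := ne_of_gt (basic α hα hirr (k+1)).1
    have hkey : ((cfA α (k+2) : ℝ) + cfFrac α (k+2)) * cfFrac α (k+1) = 1 := by
      rw [cfA_add_frac α hα hirr (k+1)]
      field_simp [hne]
    rw [cfD_rec α k]
    linear_combination ((cfA α (k+2) : ℝ) + cfFrac α (k+2)) * ih - cfD α k * hkey

lemma absD_succ (α : ℝ) (hα : α ∈ Set.Ioo (0:ℝ) 1) (hirr : Irrational α) (k : ℕ) :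
    |cfD α (k+1)| = cfFrac α (k+1) * |cfD α k| := by
  rw [cfD_succ α hα hirr k, abs_mul, abs_neg, abs_of_pos (basic α hα hirr (k+1)).1]

lemma absD_pos (α : ℝ) (hα : α ∈ Set.Ioo (0:ℝ) 1) (hirr : Irrational α) (k : ℕ) :
    0 < |cfD α k| := by
  induction k with
  | zero => rw [cfD_zero]; rw [abs_of_pos hα.1]; exact hα.1
  | succ k ih =>
    rw [absD_succ α hα hirr k]
    exact mul_pos (basic α hα hirr (k+1)).1 ih

lemma cfD_sign (α : ℝ) (hα : α ∈ Set.Ioo (0:ℝ) 1) (hirr : Irrational α) (k : ℕ) :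
    cfD α k = (-1)^k * |cfD α k| := by
  induction k with
  | zero => rw [cfD_zero, abs_of_pos hα.1]; ring
  | succ k ih =>
    rw [absD_succ α hα hirr k, cfD_succ α hα hirr k]
    linear_combination (-(cfFrac α (k+1))) * ih

lemma absD_lt (α : ℝ) (hα : α ∈ Set.Ioo (0:ℝ) 1) (hirr : Irrational α) (k : ℕ) :
    |cfD α (k+1)| < |cfD α k| := by
  rw [absD_succ α hα hirr k]
  have h := (basic α hα hirr (k+1)).2.1
  nlinarith [absD_pos α hα hirr k, (basic α hα hirr (k+1)).1]

lemma absD_mono (α : ℝ) (hα : α ∈ Set.Ioo (0:ℝ) 1) (hirr : Irrational α) {j k : ℕ}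
    (h : j ≤ k) : |cfD α k| ≤ |cfD α j| := by
  induction k with
  | zero => simp_all
  | succ k ih =>
    rcases Nat.lt_or_ge j (k+1) with h' | h'
    · exact le_trans (le_of_lt (absD_lt α hα hirr k)) (ih (by omega))
    · have : j = k+1 := le_antisymm h h'
      rw [this]

lemma absD_rec (α : ℝ) (hα : α ∈ Set.Ioo (0:ℝ) 1) (hirr : Irrational α) (k : ℕ) :
    |cfD α k| = (cfA α (k+2) : ℝ) * |cfD α (k+1)| + |cfD α (k+2)| := by
  have hkey : ((cfA α (k+2) : ℝ) + cfFrac α (k+2)) * cfFrac α (k+1) = 1 := by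
    rw [cfA_add_frac α hα hirr (k+1)]
    field_simp [ne_of_gt (basic α hα hirr (k+1)).1]
  rw [absD_succ α hα hirr (k+1), absD_succ α hα hirr k]
  linear_combination (-|cfD α k|) * hkey

lemma dni_eq_of_fract (x y : ℝ) (h : Int.fract x = Int.fract y) :
    distNearInt x = distNearInt y := by
  unfold distNearInt; rw [h]

lemma dni_le_abs (x : ℝ) (m : ℤ) : distNearInt x ≤ |x - m| := by
  have h : distNearInt x = distNearInt (x - m) := by
    apply dni_eq_of_fract
    rw [Int.fract_sub_intCast]
  rw [h]
  set y := x - (m:ℝ) with hy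
  unfold distNearInt
  rcases le_or_gt 0 y with h0 | h0
  · have hfl : (0:ℤ) ≤ ⌊y⌋ := Int.floor_nonneg.mpr h0
    have : Int.fract y ≤ y := by
      rw [Int.fract]
      have : (0:ℝ) ≤ ⌊y⌋ := by exact_mod_cast hfl
      linarith
    calc min (Int.fract y) (1 - Int.fract y) ≤ Int.fract y := min_le_left _ _
      _ ≤ y := this
      _ ≤ |y| := le_abs_self y
  · have hfl : ⌊y⌋ ≤ -1 := by
      have h2 : ¬ (0 ≤ ⌊y⌋) := fun hc => absurd (Int.floor_nonneg.mp hc) (not_le.mpr h0)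
      omega
    have hfl' : ((⌊y⌋ : ℝ)) ≤ -1 := by exact_mod_cast hfl
    have hle : 1 - Int.fract y ≤ -y := by rw [Int.fract]; linarith
    calc min (Int.fract y) (1 - Int.fract y) ≤ 1 - Int.fract y := min_le_right _ _
      _ ≤ -y := hle
      _ ≤ |y| := neg_le_abs y

lemma dni_eq_abs (x : ℝ) (m : ℤ) (h : |x - m| ≤ 1/2) : distNearInt x = |x - m| := by
  have heq : distNearInt x = distNearInt (x - m) := by
    apply dni_eq_of_fract
    rw [Int.fract_sub_intCast]
  rw [heq]
  set y := x - (m:ℝ) with hy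
  have habs := abs_le.mp h
  unfold distNearInt
  rcases le_or_gt 0 y with h0 | h0
  · have hfl : ⌊y⌋ = 0 := by
      apply Int.floor_eq_zero_iff.mpr
      constructor
      · exact h0
      · linarith [habs.2]
    have hfr : Int.fract y = y := by rw [Int.fract, hfl]; simp
    rw [hfr, abs_of_nonneg h0]
    have : y ≤ 1 - y := by linarith [habs.2]
    exact min_eq_left this
  · have hfl : ⌊y⌋ = -1 := by
      apply Int.floor_eq_iff.mpr
      constructor
      · push_cast; linarith [habs.1]
      · push_cast; linarith
    have hfr : Int.fract y = y + 1 := by rw [Int.fract, hfl]; push_cast; ring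
    rw [hfr, abs_of_neg h0]
    have : -y ≤ y + 1 := by linarith [habs.1]
    rw [min_comm]
    have h2 : 1 - (y+1) = -y := by ring
    rw [h2]
    exact min_eq_left this

lemma Tbound (α : ℝ) (hα : α ∈ Set.Ioo (0:ℝ) 1) (hirr : Irrational α)
    (b : ℕ → ℕ) (hbk : ∀ k, 1 ≤ k → b k ≤ cfA α (k+1)) (N : ℕ) :
    ∀ d m, m + 1 + d = N + 1 →
      -|cfD α (m+1)| < (-1)^(m+1) * ∑ k ∈ Finset.Ico (m+1) (N+1), (b k : ℝ) * cfD α k ∧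
      (-1)^(m+1) * ∑ k ∈ Finset.Ico (m+1) (N+1), (b k : ℝ) * cfD α k < |cfD α m| := by
  intro d
  induction d with
  | zero =>
    intro m hm
    have hmN : m + 1 = N + 1 := by omega
    rw [hmN]
    simp only [Finset.Ico_self, Finset.sum_empty, mul_zero]
    constructor
    · linarith [absD_pos α hα hirr (N+1)]
    · exact absD_pos α hα hirr m
  | succ d ih =>
    intro m hm
    have hlt : m + 1 < N + 1 := by omega
    obtain ⟨ih1, ih2⟩ := ih (m+1) (by omega)
    rw [Finset.sum_eq_sum_Ico_succ_bot hlt]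
    have hsign : cfD α (m+1) = (-1)^(m+1) * |cfD α (m+1)| := cfD_sign α hα hirr (m+1)
    have hpow : ((-1:ℝ))^(m+1) * (-1)^(m+1) = 1 := by
      rw [← pow_add, ← two_mul, pow_mul]
      norm_num
    have hflip : ((-1:ℝ))^(m+1) = -((-1:ℝ))^(m+2) := by
      rw [pow_succ (-1:ℝ) (m+1)]
      ring
    set S := ∑ k ∈ Finset.Ico (m+1+1) (N+1), (b k : ℝ) * cfD α k with hS
    have h1 : (-1:ℝ)^(m+1) * cfD α (m+1) = |cfD α (m+1)| := by
      nth_rewrite 1 [hsign]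
      rw [← mul_assoc, hpow, one_mul]
    have hexp : (-1:ℝ)^(m+1) * ((b (m+1) : ℝ) * cfD α (m+1) + S)
        = (b (m+1) : ℝ) * |cfD α (m+1)| - (-1)^(m+2) * S := by
      calc (-1:ℝ)^(m+1) * ((b (m+1) : ℝ) * cfD α (m+1) + S)
          = (b (m+1):ℝ) * ((-1:ℝ)^(m+1) * cfD α (m+1)) + (-1:ℝ)^(m+1) * S := by ring
        _ = (b (m+1) : ℝ) * |cfD α (m+1)| - (-1:ℝ)^(m+2) * S := by rw [h1, hflip]; ring
    rw [hexp]
    have hbb : (b (m+1) : ℝ) ≤ (cfA α (m+2) : ℝ) := by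
      exact_mod_cast hbk (m+1) (by omega)
    have hb0 : (0:ℝ) ≤ (b (m+1) : ℝ) := Nat.cast_nonneg _
    have hrec := absD_rec α hα hirr m
    have hDpos1 := absD_pos α hα hirr (m+1)
    constructor
    · nlinarith [ih2]
    · nlinarith [ih1]

end OstAux


theorem stmt8 (α : ℝ) (hα : α ∈ Set.Ioo (0:ℝ) 1) (hirr : Irrational α)
    (n : ℕ) (hn : 1 ≤ n) (b : ℕ → ℕ) (hb : OstrowskiRep α n b)
    (L : ℕ) (hL : b L ≠ 0) (hL0 : ∀ k, k < L → b k = 0)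
    (hLlow : 2 ≤ L ∨ (α < 1 / 2 ∧ 1 ≤ L)) :
    distNearInt ((n : ℝ) * α) < distNearInt ((cfQ α (L - 1) : ℝ) * α) := by
  obtain ⟨hb0, hbk, hcarry, N, hN, hsum⟩ := hb
  have hLN : L ≤ N := by
    by_contra h
    exact hL (hN L (by omega))
  have hL1 : 1 ≤ L := by
    rcases hLlow with h | h
    · omega
    · exact h.2
  have hLeq : L - 1 + 1 = L := by omega
  set P : ℕ := ∑ k ∈ Finset.range (N+1), b k * cfP α k with hPdef
  set T : ℝ := ∑ k ∈ Finset.Ico L (N+1), (b k : ℝ) * OstAux.cfD α k with hTdef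
  have hP : ((n:ℝ)) * α - (P : ℝ) = T := by
    have h1 : ((n:ℝ)) * α - (P : ℝ) =
        ∑ k ∈ Finset.range (N+1), (b k : ℝ) * OstAux.cfD α k := by
      rw [hsum, hPdef]
      push_cast
      rw [Finset.sum_mul, ← Finset.sum_sub_distrib]
      apply Finset.sum_congr rfl
      intro k _
      unfold OstAux.cfD
      ring
    rw [h1, hTdef, Finset.range_eq_Ico,
      ← Finset.sum_Ico_consecutive _ (Nat.zero_le L) (by omega : L ≤ N+1)]
    have h2 : ∑ k ∈ Finset.Ico 0 L, (b k : ℝ) * OstAux.cfD α k = 0 := by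
      apply Finset.sum_eq_zero
      intro k hk
      rw [hL0 k (Finset.mem_Ico.mp hk).2]
      simp
    rw [h2, zero_add]
  obtain ⟨hlow, hup⟩ := OstAux.Tbound α hα hirr b hbk N (N + 1 - L) (L-1) (by omega)
  rw [hLeq] at hlow hup
  have hDlt : |OstAux.cfD α L| < |OstAux.cfD α (L-1)| := by
    have h := OstAux.absD_lt α hα hirr (L-1)
    rwa [hLeq] at h
  have hTabs : |T| < |OstAux.cfD α (L-1)| := by
    have habs : |T| = |(-1:ℝ)^L * T| := by
      rw [abs_mul, abs_pow, abs_neg, abs_one, one_pow, one_mul]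
    rw [habs, abs_lt]
    exact ⟨by linarith, hup⟩
  have hcastP : (((P : ℕ) : ℤ) : ℝ) = ((P : ℕ) : ℝ) := by push_cast; ring
  have hle : distNearInt ((n:ℝ)*α) ≤ |T| := by
    have h := OstAux.dni_le_abs ((n:ℝ)*α) ((P : ℕ) : ℤ)
    rw [hcastP, hP] at h
    exact h
  have hhalf : |OstAux.cfD α (L-1)| ≤ 1/2 := by
    rcases hLlow with h2 | ⟨hhalfα, _⟩
    · have hm : |OstAux.cfD α (L-1)| ≤ |OstAux.cfD α 1| :=
        OstAux.absD_mono α hα hirr (by omega)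
      have ha1 : (1:ℝ) ≤ (cfA α 1 : ℝ) := by
        exact_mod_cast OstAux.one_le_cfA α hα hirr 0
      have hcast : ((cfA α 1 : ℝ)) = ((⌊1/α⌋ : ℤ) : ℝ) := OstAux.cfA_cast α hα hirr 0
      have hfr : (cfA α 1 : ℝ) + cfFrac α 1 = 1 / α := OstAux.cfA_add_frac α hα hirr 0
      have hlt1 : 1 / α < (cfA α 1 : ℝ) + 1 := by
        rw [hcast]
        exact Int.lt_floor_add_one (1/α)
      have hgt : 1 < α * ((cfA α 1:ℝ) + 1) := by
        rw [div_lt_iff₀ hα.1] at hlt1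
        linarith [hlt1]
      have h3 : ((cfA α 1:ℝ) + cfFrac α 1) * α = 1 := by
        rw [hfr]; field_simp [ne_of_gt hα.1]
      have hD1 : |OstAux.cfD α 1| = cfFrac α 1 * α := by
        have h4 := OstAux.absD_succ α hα hirr 0
        rw [OstAux.cfD_zero, abs_of_pos hα.1] at h4
        exact h4
      have hp : 0 ≤ α * ((cfA α 1:ℝ) - 1) := mul_nonneg hα.1.le (by linarith)
      have hD1lt : |OstAux.cfD α 1| < 1/2 := by
        rw [hD1]
        nlinarith [hgt, hp, h3]
      linarith
    · have hm : |OstAux.cfD α (L-1)| ≤ |OstAux.cfD α 0| :=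
        OstAux.absD_mono α hα hirr (Nat.zero_le _)
      rw [OstAux.cfD_zero, abs_of_pos hα.1] at hm
      linarith
  have hD2 : distNearInt ((cfQ α (L-1) : ℝ) * α) = |OstAux.cfD α (L-1)| := by
    have hc2 : (((cfP α (L-1) : ℕ) : ℤ) : ℝ) = ((cfP α (L-1) : ℕ) : ℝ) := by push_cast; ring
    have h := OstAux.dni_eq_abs ((cfQ α (L-1) : ℝ) * α) ((cfP α (L-1) : ℕ) : ℤ)
      (by rw [hc2]; exact hhalf)
    rw [hc2] at h
    exact h
  calc distNearInt ((n:ℝ)*α) ≤ |T| := hle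
    _ < |OstAux.cfD α (L-1)| := hTabs
    _ = distNearInt ((cfQ α (L-1) : ℝ) * α) := hD2.symm
end

section
/- Let α ∈ (0,1) be irrational and n ≥ 1 with L = k_0(n) ≥ 2 (or L ≥ 1 if α < 1/2). Then ‖nα‖ = {nα} if L is even, and ‖nα‖ = 1 − {nα} if L is odd, where {·} is the fractional part and ‖·‖ the distance to the nearest integer. -/
/-- Product of the first `k` Gauss-map iterates. -/
noncomputable def cfDm (α : ℝ) (k : ℕ) : ℝ := ∏ i ∈ Finset.range k, cfFrac α i

lemma cfFrac_prop (α : ℝ) (hα : α ∈ Set.Ioo (0:ℝ) 1) (hirr : Irrational α) (k : ℕ) :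
    0 < cfFrac α k ∧ cfFrac α k < 1 ∧ Irrational (cfFrac α k) := by
  induction k with
  | zero => exact ⟨hα.1, hα.2, hirr⟩
  | succ k ih =>
    obtain ⟨h0, h1, hi⟩ := ih
    have hinv : Irrational (1 / cfFrac α k) := by
      simpa [one_div] using hi.inv
    have hirr' : Irrational (Int.fract (1 / cfFrac α k)) := by
      rw [Int.fract]
      exact Irrational.sub_intCast hinv _
    have hne : Int.fract (1 / cfFrac α k) ≠ 0 := fun h => by
      rw [h] at hirr'; exact hirr' ⟨0, by simp⟩
    refine ⟨?_, ?_, hirr'⟩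
    · exact lt_of_le_of_ne (Int.fract_nonneg _) (Ne.symm hne)
    · exact Int.fract_lt_one (1 / cfFrac α k)

lemma cfA_cast (α : ℝ) (hα : α ∈ Set.Ioo (0:ℝ) 1) (hirr : Irrational α) (k : ℕ) :
    (cfA α (k + 1) : ℝ) = (⌊1 / cfFrac α k⌋ : ℤ) ∧ 1 ≤ cfA α (k + 1) := by
  obtain ⟨h0, h1, _⟩ := cfFrac_prop α hα hirr k
  have hgt : 1 < 1 / cfFrac α k := by rw [lt_div_iff₀ h0]; linarith
  have hfl : 1 ≤ ⌊1 / cfFrac α k⌋ := by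
    exact_mod_cast Int.le_floor.mpr (by exact_mod_cast hgt.le)
  have htn : ((⌊1 / cfFrac α k⌋).toNat : ℤ) = ⌊1 / cfFrac α k⌋ := Int.toNat_of_nonneg (by omega)
  constructor
  · show ((⌊1 / cfFrac α k⌋).toNat : ℝ) = _
    exact_mod_cast htn
  · show 1 ≤ (⌊1 / cfFrac α k⌋).toNat
    omega

lemma cfFrac_key (α : ℝ) (hα : α ∈ Set.Ioo (0:ℝ) 1) (hirr : Irrational α) (k : ℕ) :
    cfFrac α k * cfFrac α (k + 1) = 1 - (cfA α (k + 1) : ℝ) * cfFrac α k := by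
  obtain ⟨h0, h1, _⟩ := cfFrac_prop α hα hirr k
  have hca := (cfA_cast α hα hirr k).1
  have : cfFrac α (k + 1) = 1 / cfFrac α k - ⌊1 / cfFrac α k⌋ := by
    rw [show cfFrac α (k + 1) = Int.fract (1 / cfFrac α k) from rfl, Int.fract]
  rw [this, hca]
  field_simp

lemma cfDm_succ (α : ℝ) (k : ℕ) : cfDm α (k + 1) = cfDm α k * cfFrac α k :=
  Finset.prod_range_succ _ _

lemma cfDm_pos (α : ℝ) (hα : α ∈ Set.Ioo (0:ℝ) 1) (hirr : Irrational α) (k : ℕ) :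
    0 < cfDm α k := by
  induction k with
  | zero => simp [cfDm]
  | succ k ih => rw [cfDm_succ]; exact mul_pos ih (cfFrac_prop α hα hirr k).1

lemma cfDm_succ_lt (α : ℝ) (hα : α ∈ Set.Ioo (0:ℝ) 1) (hirr : Irrational α) (k : ℕ) :
    cfDm α (k + 1) < cfDm α k := by
  rw [cfDm_succ]
  nth_rewrite 2 [← mul_one (cfDm α k)]
  exact mul_lt_mul_of_pos_left (cfFrac_prop α hα hirr k).2.1 (cfDm_pos α hα hirr k)

lemma cfDm_anti (α : ℝ) (hα : α ∈ Set.Ioo (0:ℝ) 1) (hirr : Irrational α) :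
    Antitone (cfDm α) :=
  antitone_nat_of_succ_le fun k => (cfDm_succ_lt α hα hirr k).le

lemma cfDm_rec (α : ℝ) (hα : α ∈ Set.Ioo (0:ℝ) 1) (hirr : Irrational α) (k : ℕ) :
    cfDm α (k + 2) = cfDm α k - (cfA α (k + 1) : ℝ) * cfDm α (k + 1) := by
  rw [cfDm_succ, cfDm_succ, mul_assoc, cfFrac_key α hα hirr k]
  ring

lemma cf_theta (α : ℝ) (hα : α ∈ Set.Ioo (0:ℝ) 1) (hirr : Irrational α) :
    ∀ k, (cfQ α k : ℝ) * α - (cfP α k : ℝ) = (-1) ^ k * cfDm α (k + 1)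
  | 0 => by
      show (1 : ℕ) * α - ((0:ℕ):ℝ) = (-1)^0 * cfDm α 1
      rw [show cfDm α 1 = cfFrac α 0 from by rw [cfDm, Finset.prod_range_one],
        show cfFrac α 0 = α from rfl]
      push_cast; ring
  | 1 => by
      have h := cfFrac_key α hα hirr 0
      have h0 : cfFrac α 0 = α := rfl
      rw [h0] at h
      have h2 : cfDm α 2 = α * cfFrac α 1 := by
        rw [cfDm_succ, cfDm_succ, show cfDm α 0 = 1 from by simp [cfDm],
          show cfFrac α 0 = α from rfl]; ring
      show (cfA α 1 : ℝ) * α - ((1:ℕ):ℝ) = (-1)^1 * cfDm α 2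
      rw [h2, h]
      push_cast; ring
  | (k + 2) => by
      have ih1 := cf_theta α hα hirr (k + 1)
      have ih0 := cf_theta α hα hirr k
      have hrec := cfDm_rec α hα hirr (k + 1)
      show ((cfA α (k + 2) * cfQ α (k + 1) + cfQ α k : ℕ) : ℝ) * α -
          ((cfA α (k + 2) * cfP α (k + 1) + cfP α k : ℕ) : ℝ) = _
      push_cast
      have : ((cfA α (k+2):ℝ) * cfQ α (k+1) + cfQ α k) * α -
          ((cfA α (k+2):ℝ) * cfP α (k+1) + cfP α k)
          = (cfA α (k+2):ℝ) * ((cfQ α (k+1):ℝ) * α - cfP α (k+1))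
            + ((cfQ α k : ℝ) * α - cfP α k) := by ring
      rw [this, ih1, ih0, hrec]
      ring

lemma cf_peel (α : ℝ) (b : ℕ → ℕ) {m M : ℕ} (hmM : m < M) :
    (-1:ℝ) ^ m * ∑ k ∈ Finset.Ico m M, (b k : ℝ) * ((-1) ^ k * cfDm α (k + 1)) =
      (b m : ℝ) * cfDm α (m + 1) -
        (-1) ^ (m + 1) * ∑ k ∈ Finset.Ico (m + 1) M, (b k : ℝ) * ((-1) ^ k * cfDm α (k + 1)) := by
  rw [Finset.sum_eq_sum_Ico_succ_bot hmM]
  have h1 : ((-1:ℝ)) ^ m * (-1:ℝ) ^ m = 1 := by rw [← mul_pow]; norm_num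
  linear_combination (b m : ℝ) * cfDm α (m + 1) * h1

lemma tail_bound (α : ℝ) (hα : α ∈ Set.Ioo (0:ℝ) 1) (hirr : Irrational α)
    (b : ℕ → ℕ) (hbk : ∀ k, 1 ≤ k → b k ≤ cfA α (k + 1)) (M : ℕ) :
    ∀ j m, 1 ≤ m → M ≤ m + j →
      -cfDm α (m + 1) <
        (-1:ℝ) ^ m * ∑ k ∈ Finset.Ico m M, (b k : ℝ) * ((-1) ^ k * cfDm α (k + 1)) ∧
      (-1:ℝ) ^ m * ∑ k ∈ Finset.Ico m M, (b k : ℝ) * ((-1) ^ k * cfDm α (k + 1)) <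
        cfDm α m := by
  intro j
  induction j with
  | zero =>
    intro m hm hM
    rw [Finset.Ico_eq_empty (by omega), Finset.sum_empty, mul_zero]
    exact ⟨neg_lt_zero.mpr (cfDm_pos α hα hirr _), cfDm_pos α hα hirr _⟩
  | succ j ih =>
    intro m hm hM
    by_cases hcase : M ≤ m
    · rw [Finset.Ico_eq_empty (by omega), Finset.sum_empty, mul_zero]
      exact ⟨neg_lt_zero.mpr (cfDm_pos α hα hirr _), cfDm_pos α hα hirr _⟩
    · push_neg at hcase
      obtain ⟨hlo, hhi⟩ := ih (m + 1) (by omega) (by omega)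
      rw [cf_peel α b hcase]
      have hb : (b m : ℝ) ≤ (cfA α (m + 1) : ℝ) := by exact_mod_cast hbk m hm
      have hbnn : (0:ℝ) ≤ (b m : ℝ) := by positivity
      have hrec := cfDm_rec α hα hirr m
      have hDpos := cfDm_pos α hα hirr (m + 1)
      have hmul : (b m : ℝ) * cfDm α (m + 1) ≤ (cfA α (m + 1) : ℝ) * cfDm α (m + 1) :=
        mul_le_mul_of_nonneg_right hb hDpos.le
      have hmul0 : (0:ℝ) ≤ (b m : ℝ) * cfDm α (m + 1) := by positivity
      constructor
      · nlinarith
      · nlinarith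

theorem stmt9 (α : ℝ) (hα : α ∈ Set.Ioo (0:ℝ) 1) (hirr : Irrational α)
    (n : ℕ) (hn : 1 ≤ n) (b : ℕ → ℕ) (hb : OstrowskiRep α n b)
    (L : ℕ) (hL : b L ≠ 0) (hL0 : ∀ k, k < L → b k = 0)
    (hLlow : 2 ≤ L ∨ (α < 1 / 2 ∧ 1 ≤ L)) :
    distNearInt ((n : ℝ) * α) =
      if Even L then Int.fract ((n : ℝ) * α) else 1 - Int.fract ((n : ℝ) * α) := by
  obtain ⟨hb0, hbk, hcarry, N, hN, hsum⟩ := hb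
  have hL1 : 1 ≤ L := by rcases hLlow with h | ⟨_, h⟩ <;> omega
  have hLN : L ≤ N := by
    by_contra h
    exact hL (hN L (by omega))
  set S := ∑ k ∈ Finset.Ico L (N + 1), (b k : ℝ) * ((-1:ℝ) ^ k * cfDm α (k + 1)) with hS
  -- n α = P + S for an integer P
  have key : (n : ℝ) * α = ((∑ k ∈ Finset.range (N + 1), (b k : ℤ) * (cfP α k : ℤ) : ℤ) : ℝ) + S := by
    have h1 : (n : ℝ) = ∑ k ∈ Finset.range (N + 1), (b k : ℝ) * (cfQ α k : ℝ) := by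
      rw [hsum]; push_cast; ring
    have h2 : (n : ℝ) * α - ((∑ k ∈ Finset.range (N + 1), (b k : ℤ) * (cfP α k : ℤ) : ℤ) : ℝ)
        = ∑ k ∈ Finset.range (N + 1), (b k : ℝ) * ((-1:ℝ) ^ k * cfDm α (k + 1)) := by
      rw [h1]
      push_cast
      rw [Finset.sum_mul, ← Finset.sum_sub_distrib]
      refine Finset.sum_congr rfl fun k _ => ?_
      rw [← cf_theta α hα hirr k]
      ring
    have h3 : ∑ k ∈ Finset.range (N + 1), (b k : ℝ) * ((-1:ℝ) ^ k * cfDm α (k + 1)) = S := by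
      rw [Finset.range_eq_Ico, ← Finset.sum_Ico_consecutive _ (Nat.zero_le L) (by omega : L ≤ N + 1)]
      have hz : ∑ k ∈ Finset.Ico 0 L, (b k : ℝ) * ((-1:ℝ) ^ k * cfDm α (k + 1)) = 0 :=
        Finset.sum_eq_zero fun k hk => by rw [hL0 k (Finset.mem_Ico.mp hk).2]; simp
      rw [hz, zero_add]
    rw [h3] at h2
    linarith
  have hfract : Int.fract ((n : ℝ) * α) = Int.fract S := by
    rw [key, Int.fract_intCast_add]
  -- bounds on S
  obtain ⟨hlo, hhi⟩ := tail_bound α hα hirr b hbk (N + 1) (N + 1) L hL1 (by omega)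
  have hpos : 0 < (-1:ℝ) ^ L * S := by
    rw [hS, cf_peel α b (by omega : L < N + 1)]
    obtain ⟨hlo', hhi'⟩ := tail_bound α hα hirr b hbk (N + 1) (N + 1) (L + 1) (by omega) (by omega)
    have hbL : (1:ℝ) ≤ (b L : ℝ) := by exact_mod_cast Nat.one_le_iff_ne_zero.mpr hL
    have hDpos := cfDm_pos α hα hirr (L + 1)
    nlinarith
  -- cfDm α L < 1/2
  have hhalf : cfDm α L < 1 / 2 := by
    have hD1 : cfDm α 1 = α := by rw [cfDm, Finset.prod_range_one]; rfl
    rcases hLlow with h2L | ⟨hα2, _⟩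
    · have hD2 : cfDm α 2 < 1 / 2 := by
        have hk := cfFrac_key α hα hirr 0
        have h2 : cfDm α 2 = cfFrac α 0 * cfFrac α 1 := by
          rw [cfDm_succ, cfDm_succ, show cfDm α 0 = 1 from by simp [cfDm]]; ring
        have hfr0 : cfFrac α 0 = α := rfl
        have ha := cfA_cast α hα hirr 0
        have ha1 : (1:ℝ) ≤ (cfA α 1 : ℝ) := by exact_mod_cast ha.2
        have hfloor : (1:ℝ) / cfFrac α 0 < (cfA α 1 : ℝ) + 1 := by
          rw [ha.1]; exact Int.lt_floor_add_one _
        rw [hfr0] at hfloor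
        have h1lt : (1:ℝ) < ((cfA α 1 : ℝ) + 1) * α := (div_lt_iff₀ hα.1).mp hfloor
        have hprod : (1:ℝ) / 2 < (cfA α 1 : ℝ) * α := by
          nlinarith [mul_nonneg (by linarith : (0:ℝ) ≤ (cfA α 1 : ℝ) - 1) hα.1.le]
        have hk' : α * cfFrac α 1 = 1 - (cfA α 1 : ℝ) * α := by
          have := cfFrac_key α hα hirr 0
          norm_num [show cfFrac α 0 = α from rfl] at this
          exact this
        rw [h2, hfr0, hk']
        linarith
      calc cfDm α L ≤ cfDm α 2 := cfDm_anti α hα hirr h2L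
        _ < 1 / 2 := hD2
    · calc cfDm α L ≤ cfDm α 1 := cfDm_anti α hα hirr hL1
        _ = α := hD1
        _ < 1 / 2 := hα2
  rw [← hS] at hlo hhi
  rcases Nat.even_or_odd L with hev | hod
  · have hsgn : ((-1:ℝ)) ^ L = 1 := hev.neg_one_pow
    rw [hsgn, one_mul] at hpos hhi
    have hhalfS : S < 1 / 2 := lt_trans hhi hhalf
    have hf : Int.fract S = S := Int.fract_eq_self.mpr ⟨hpos.le, by linarith⟩
    rw [if_pos hev, distNearInt, hfract, hf]
    exact min_eq_left (by linarith)
  · have hsgn : ((-1:ℝ)) ^ L = -1 := hod.neg_one_pow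
    rw [hsgn, neg_one_mul] at hpos hhi
    have hS0 : S < 0 := by linarith
    have hS2 : -(1/2 : ℝ) < S := by linarith
    have hf : Int.fract S = S + 1 := by
      have h1 : Int.fract (S + 1 + ((-1 : ℤ) : ℝ)) = Int.fract (S + 1) := Int.fract_add_intCast _ _
      have h2 : S + 1 + ((-1 : ℤ) : ℝ) = S := by push_cast; ring
      rw [h2] at h1
      rw [h1]
      exact Int.fract_eq_self.mpr ⟨by linarith, by linarith⟩
    have hodne : ¬ Even L := by
      simp [Nat.even_iff, Nat.odd_iff.mp hod]
    rw [if_neg hodne, distNearInt, hfract, hf]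
    rw [min_eq_right (by linarith)]
end

section
/- Suppose α ∈ (0,1/2) is irrational and n ≥ 1 has b_0(n) ≥ 1 in its Ostrowski representation (i.e., k_0(n) = 0). If {nα} > 1/2, then {nα} < {(n+1)α}; in particular ‖(n+1)α‖ < ‖nα‖. -/
namespace Stmt11Aux

/-- Products of Gauss-map iterates; `eps α k = |q_k α - p_k|`. -/
noncomputable def eps (α : ℝ) (k : ℕ) : ℝ := ∏ i ∈ Finset.range (k + 1), cfFrac α i

variable {α : ℝ}

lemma cfFrac_prop (hα : α ∈ Set.Ioo (0:ℝ) 1) (hirr : Irrational α) (k : ℕ) :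
    Irrational (cfFrac α k) ∧ 0 < cfFrac α k ∧ cfFrac α k < 1 := by
  induction k with
  | zero => exact ⟨hirr, hα.1, hα.2⟩
  | succ k ih =>
    obtain ⟨h1, h2, h3⟩ := ih
    have hinv : Irrational (1 / cfFrac α k) := by rw [one_div]; exact h1.inv
    have hirr' : Irrational (Int.fract (1 / cfFrac α k)) := by
      rw [Int.fract]; exact hinv.sub_intCast _
    have hne : Int.fract (1 / cfFrac α k) ≠ 0 := by
      intro h
      exact hirr'.ne_int 0 (by exact_mod_cast h)
    refine ⟨hirr', ?_, ?_⟩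
    · show 0 < Int.fract (1 / cfFrac α k)
      exact lt_of_le_of_ne (Int.fract_nonneg _) (Ne.symm hne)
    · exact Int.fract_lt_one _

lemma cfA_floor (hα : α ∈ Set.Ioo (0:ℝ) 1) (hirr : Irrational α) (k : ℕ) :
    (cfA α (k + 1) : ℝ) = (⌊1 / cfFrac α k⌋ : ℤ) := by
  obtain ⟨_, h2, h3⟩ := cfFrac_prop hα hirr k
  have h1x : 1 < 1 / cfFrac α k := (one_lt_one_div h2 h3)
  have : (1 : ℤ) ≤ ⌊1 / cfFrac α k⌋ := by
    exact Int.le_floor.2 (by exact_mod_cast h1x.le)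
  show ((⌊1 / cfFrac α k⌋.toNat : ℤ) : ℝ) = _
  rw [Int.toNat_of_nonneg (by omega)]

lemma cfFrac_rel (hα : α ∈ Set.Ioo (0:ℝ) 1) (hirr : Irrational α) (k : ℕ) :
    cfFrac α (k + 1) = 1 / cfFrac α k - cfA α (k + 1) := by
  rw [cfA_floor hα hirr k]
  show Int.fract (1 / cfFrac α k) = _
  rw [Int.fract]

lemma eps_pos (hα : α ∈ Set.Ioo (0:ℝ) 1) (hirr : Irrational α) (k : ℕ) :
    0 < eps α k :=
  Finset.prod_pos fun i _ => (cfFrac_prop hα hirr i).2.1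

lemma eps_succ (k : ℕ) : eps α (k + 1) = eps α k * cfFrac α (k + 1) :=
  Finset.prod_range_succ _ _

lemma eps_zero : eps α 0 = α := by
  simp [eps, cfFrac]

lemma eps_rec (hα : α ∈ Set.Ioo (0:ℝ) 1) (hirr : Irrational α) (k : ℕ) :
    eps α k = cfA α (k + 2) * eps α (k + 1) + eps α (k + 2) := by
  have h2 := (cfFrac_prop hα hirr (k + 1)).2.1
  have hrel := cfFrac_rel hα hirr (k + 1)
  rw [eps_succ (k + 1), eps_succ k, hrel]
  field_simp
  ring

lemma theta_eq (hα : α ∈ Set.Ioo (0:ℝ) 1) (hirr : Irrational α) (k : ℕ) :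
    (cfQ α k : ℝ) * α - (cfP α k : ℝ) = (-1) ^ k * eps α k := by
  have hα0 : α ≠ 0 := ne_of_gt hα.1
  suffices H : ∀ k, ((cfQ α k : ℝ) * α - (cfP α k : ℝ) = (-1) ^ k * eps α k) ∧
      ((cfQ α (k+1) : ℝ) * α - (cfP α (k+1) : ℝ) = (-1) ^ (k+1) * eps α (k+1)) from (H k).1
  intro k
  induction k with
  | zero =>
    constructor
    · simp [cfQ, cfP, eps_zero]
    · have hrel := cfFrac_rel hα hirr 0
      have : cfFrac α 0 = α := rfl
      rw [this] at hrel
      have h1 : eps α 1 = α * cfFrac α 1 := by rw [eps_succ 0, eps_zero]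
      rw [h1, hrel]
      show (cfA α 1 : ℝ) * α - (1 : ℕ) = _
      field_simp
      ring
  | succ k ih =>
    obtain ⟨ih1, ih2⟩ := ih
    refine ⟨ih2, ?_⟩
    have hq : (cfQ α (k + 2) : ℝ) = (cfA α (k + 2) : ℝ) * cfQ α (k + 1) + cfQ α k := by
      show ((cfA α (k + 2) * cfQ α (k + 1) + cfQ α k : ℕ) : ℝ) = _
      push_cast; ring
    have hp : (cfP α (k + 2) : ℝ) = (cfA α (k + 2) : ℝ) * cfP α (k + 1) + cfP α k := by
      show ((cfA α (k + 2) * cfP α (k + 1) + cfP α k : ℕ) : ℝ) = _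
      push_cast; ring
    have hrec := eps_rec hα hirr k
    have : eps α (k + 2) = eps α k - cfA α (k + 2) * eps α (k + 1) := by linarith
    rw [hq, hp, this]
    linear_combination ih1 + (cfA α (k + 2) : ℝ) * ih2

end Stmt11Aux

open Stmt11Aux in
theorem stmt11 (α : ℝ) (hα : α ∈ Set.Ioo (0:ℝ) (1 / 2)) (hirr : Irrational α)
    (n : ℕ) (hn : 1 ≤ n) (b : ℕ → ℕ) (hb : OstrowskiRep α n b) (hb0 : 1 ≤ b 0)
    (hfrac : 1 / 2 < Int.fract ((n : ℝ) * α)) :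
    Int.fract ((n : ℝ) * α) < Int.fract (((n : ℝ) + 1) * α) ∧
      distNearInt (((n : ℝ) + 1) * α) < distNearInt ((n : ℝ) * α) := by
  have hα1 : α ∈ Set.Ioo (0:ℝ) 1 := ⟨hα.1, lt_trans hα.2 (by norm_num)⟩
  obtain ⟨hb1, hb2, -, N, hbz, hsum⟩ := hb
  -- digit bound for all k
  have hbound : ∀ k, (b k : ℝ) ≤ (cfA α (k + 1) : ℝ) := by
    intro k
    rcases Nat.eq_zero_or_pos k with rfl | hk
    · exact_mod_cast le_trans hb1 (Nat.sub_le _ _)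
    · exact_mod_cast hb2 k hk
  set T : ℕ → ℝ := fun j => ∑ k ∈ Finset.Ico j (N + 1), (b k : ℝ) * ((-1) ^ k * eps α k)
    with hT
  -- downward induction bounds
  have key : ∀ m j, j + m = N + 1 →
      -eps α j < (-1) ^ j * T j ∧
      (-1) ^ j * T j < (cfA α (j + 1) : ℝ) * eps α j + eps α (j + 1) := by
    intro m
    induction m with
    | zero =>
      intro j hj
      have : T j = 0 := by
        simp [hT, show j = N + 1 by omega]
      rw [this, mul_zero]
      have e0 := eps_pos hα1 hirr j
      have e1 := eps_pos hα1 hirr (j + 1)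
      have ha : (0:ℝ) ≤ (cfA α (j+1) : ℝ) := Nat.cast_nonneg _
      constructor <;> nlinarith
    | succ m ih =>
      intro j hj
      have hjN : j < N + 1 := by omega
      have hsplit : T j = (b j : ℝ) * ((-1) ^ j * eps α j) + T (j + 1) := by
        rw [hT]
        exact Finset.sum_eq_sum_Ico_succ_bot hjN _
      obtain ⟨ihl, ihr⟩ := ih (j + 1) (by omega)
      have hsign : (-1 : ℝ) ^ (j + 1) = -(-1) ^ j := by rw [pow_succ]; ring
      have hsq : ((-1 : ℝ) ^ j) * ((-1) ^ j) = 1 := by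
        rw [← pow_add]
        exact Even.neg_one_pow ⟨j, rfl⟩
      have hval : (-1) ^ j * T j = (b j : ℝ) * eps α j - (-1) ^ (j + 1) * T (j + 1) := by
        rw [hsplit, hsign]
        linear_combination ((b j : ℝ) * eps α j) * hsq
      have hrec := eps_rec hα1 hirr j
      have hbj : (0:ℝ) ≤ (b j : ℝ) := Nat.cast_nonneg _
      have e0 := eps_pos hα1 hirr j
      constructor
      · rw [hval]; nlinarith
      · rw [hval]
        have := hbound j
        nlinarith
  -- the sum S
  set S : ℝ := T 0 with hS
  have hS0 : S = ∑ k ∈ Finset.range (N + 1), (b k : ℝ) * ((-1) ^ k * eps α k) := by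
    rw [hS, hT, Finset.range_eq_Ico]
  -- identify n α - P = S
  set P : ℕ := ∑ k ∈ Finset.range (N + 1), b k * cfP α k with hP
  have hid : (n : ℝ) * α = (P : ℝ) + S := by
    have hn' : (n : ℝ) = ∑ k ∈ Finset.range (N + 1), (b k : ℝ) * (cfQ α k : ℝ) := by
      rw [hsum]; push_cast; rfl
    have hP' : (P : ℝ) = ∑ k ∈ Finset.range (N + 1), (b k : ℝ) * (cfP α k : ℝ) := by
      rw [hP]; push_cast; rfl
    rw [hn', hP', hS0, Finset.sum_mul, ← Finset.sum_add_distrib]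
    apply Finset.sum_congr rfl
    intro k _
    rw [← theta_eq hα1 hirr k]
    ring
  -- bounds on S
  have hsplit0 : S = (b 0 : ℝ) * eps α 0 + T 1 := by
    have h := Finset.sum_eq_sum_Ico_succ_bot (by omega : 0 < N + 1)
      (fun k => (b k : ℝ) * ((-1) ^ k * eps α k))
    rw [hS, hT]
    simpa using h
  obtain ⟨k1l, k1r⟩ := key N 1 (by omega)
  have hT1 : -(((cfA α 2 : ℝ)) * eps α 1 + eps α 2) < T 1 ∧ T 1 < eps α 1 := by
    have : (-1 : ℝ) ^ 1 * T 1 = -T 1 := by ring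
    rw [this] at k1l k1r
    constructor <;> linarith
  have hrec0 := eps_rec hα1 hirr 0
  have heps0 : eps α 0 = α := eps_zero
  have heps1 : eps α 1 = 1 - (cfA α 1 : ℝ) * α := by
    have hrel := cfFrac_rel hα1 hirr 0
    have h00 : cfFrac α 0 = α := rfl
    rw [h00] at hrel
    rw [eps_succ 0, heps0, hrel]
    rw [mul_sub, mul_one_div, div_self (ne_of_gt hα1.1)]
    ring
  -- b 0 ≤ a 1 - 1 in ℝ
  have ha1 : 1 ≤ cfA α 1 := by
    have := hb1
    omega
  have hb0R : (b 0 : ℝ) ≤ (cfA α 1 : ℝ) - 1 := by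
    have h : b 0 + 1 ≤ cfA α 1 := by omega
    have h2 : ((b 0 : ℝ) + 1) ≤ (cfA α 1 : ℝ) := by exact_mod_cast h
    linarith
  have hb0R' : (1 : ℝ) ≤ (b 0 : ℝ) := by exact_mod_cast hb0
  have hSpos : 0 < S := by
    have h : -eps α 0 < T 1 := by rw [hrec0]; linarith [hT1.1]
    rw [heps0] at h
    rw [hsplit0, heps0]
    nlinarith [hα.1, hb0R']
  have hSup : S < 1 - α := by
    rw [hsplit0, heps0]
    nlinarith [hα.1, hT1.2, heps1, hb0R]
  -- fract computations
  have hfr1 : Int.fract ((n : ℝ) * α) = S := by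
    rw [hid, show ((P : ℝ)) = ((P : ℤ) : ℝ) by push_cast; ring, Int.fract_intCast_add,
      Int.fract_eq_self.2 ⟨hSpos.le, by linarith [hα.1]⟩]
  have hfr2 : Int.fract (((n : ℝ) + 1) * α) = S + α := by
    have : ((n : ℝ) + 1) * α = ((P : ℤ) : ℝ) + (S + α) := by
      push_cast
      rw [add_mul, one_mul, hid]
      push_cast
      ring
    rw [this, Int.fract_intCast_add,
      Int.fract_eq_self.2 ⟨by linarith [hα.1], by linarith⟩]
  rw [hfr1] at hfrac
  constructor
  · rw [hfr1, hfr2]; linarith [hα.1]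
  · rw [distNearInt, distNearInt, hfr1, hfr2]
    have h1 : min S (1 - S) = 1 - S := min_eq_right (by linarith)
    rw [h1]
    calc min (S + α) (1 - (S + α)) ≤ 1 - (S + α) := min_le_right _ _
      _ < 1 - S := by linarith [hα.1]
end
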